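/- arXiv:1902.10708 — 3 statements merged into one kernel-verified Lean document; each statement's English description precedes it below -/
import Mathlib

section
/- In Newton's model, for every n ≥ 0, every k ≥ 1 and every measurable A ⊆ Θ, P(θ_{n+k} ∈ A | X_{1:n}) = E(G(A) | X_{1:n}) P-almost surely, where G is the P-a.s. weak limit of the martingale (G_n). -/
open MeasureTheory ProbabilityTheory Filter Set
open scoped ENNReal NNReal Topology

set_option maxHeartbeats 1000000

noncomputable section

/-- Newton's model: `X n` are the observables (indexed from 1; index 0 unused),
`th n` the latent parameters, `f x t` the kernel density of `x` given `t` w.r.t. `μ`,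
`G0` the initial guess, `α` the weight sequence, `F` the natural filtration of `X`,
and `G n` Newton's recursively defined random (predictive) probability measures. -/
structure NewtonModel (Ω : Type*) [mΩ : MeasurableSpace Ω]
    (𝕏 : Type*) [m𝕏 : MeasurableSpace 𝕏]
    (Θ : Type*) [mΘ : MeasurableSpace Θ] where
  P : Measure Ω
  probP : IsProbabilityMeasure P
  X : ℕ → Ω → 𝕏
  meas_X : ∀ n, Measurable (X n)
  th : ℕ → Ω → Θ
  meas_th : ∀ n, Measurable (th n)
  f : 𝕏 → Θ → ℝ≥0∞
  meas_f : Measurable (Function.uncurry f)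
  μ : Measure 𝕏
  sfin : SigmaFinite μ
  f_dens : ∀ t, ∫⁻ x, f x t ∂μ = 1
  G0 : Measure Θ
  probG0 : IsProbabilityMeasure G0
  α : ℕ → ℝ
  α_mem : ∀ n, α n ∈ Set.Ioo (0 : ℝ) 1
  /-- the natural filtration of `X` : `F n = σ(X 1, …, X n)` -/
  F : ℕ → MeasurableSpace Ω
  F_def : ∀ n, F n = ⨆ i ∈ Set.Icc 1 n, MeasurableSpace.comap (X i) m𝕏
  /-- Newton's sequence of random measures -/
  G : ℕ → Ω → Measure Θ
  G_zero : ∀ ω, G 0 ω = G0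
  G_rec : ∀ n ω, G (n + 1) ω =
      ENNReal.ofReal (1 - α (n + 1)) • G n ω +
      ENNReal.ofReal (α (n + 1)) •
        ((∫⁻ t, f (X (n + 1) ω) t ∂(G n ω))⁻¹ • (G n ω).withDensity (f (X (n + 1) ω)))
  meas_G : ∀ n, ∀ A : Set Θ, MeasurableSet A → Measurable fun ω => G n ω A
  /-- `θ₁ ∼ G₀` -/
  th_one : Measure.map (th 1) P = G0
  /-- the conditional distribution of `θ_{n+1}` given `X_{1:n}` is `G n` -/
  cond_th : ∀ (n : ℕ) (A : Set Θ), MeasurableSet A →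
      (fun ω => (G n ω A).toReal)
        =ᵐ[P] P[fun ω => A.indicator (fun _ => (1 : ℝ)) (th (n + 1) ω) | F n]
  /-- the conditional distribution of `X_{n+1}` given `(θ_k)_k` and `X_{1:n}` has
  density `f (· | θ_{n+1})` with respect to `μ` -/
  cond_X : ∀ (n : ℕ) (B : Set 𝕏), MeasurableSet B →
      (fun ω => (∫⁻ x in B, f x (th (n + 1) ω) ∂μ).toReal)
        =ᵐ[P] P[fun ω => B.indicator (fun _ => (1 : ℝ)) (X (n + 1) ω) |
            (⨆ k, MeasurableSpace.comap (th k) mΘ) ⊔ F n]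

/-- weak convergence of a sequence of measures -/
def WeakLim {Θ : Type*} [MeasurableSpace Θ] [TopologicalSpace Θ]
    (Gs : ℕ → Measure Θ) (H : Measure Θ) : Prop :=
  ∀ g : BoundedContinuousFunction Θ ℝ,
    Tendsto (fun n => ∫ t, g t ∂(Gs n)) atTop (𝓝 (∫ t, g t ∂H))

lemma ennreal_inv_mul_self_le_one (a : ℝ≥0∞) : a⁻¹ * a ≤ 1 := by
  rcases eq_or_ne a 0 with rfl | h0
  · simp
  rcases eq_or_ne a ∞ with rfl | htop
  · simp
  · rw [ENNReal.inv_mul_cancel h0 htop]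

lemma ennreal_inv_mul_mul (q r : ℝ≥0∞) (hq : q ≠ ∞) (h0 : q = 0 → r = 0) :
    q⁻¹ * r * q = r := by
  rcases eq_or_ne q 0 with rfl | hq0
  · simp [h0 rfl]
  · rw [mul_comm, ← mul_assoc, ENNReal.mul_inv_cancel hq0 hq, one_mul]

/-- measurability of a parametrized lintegral against a (sub-probability) family of measures -/
lemma measurable_lintegral_kernel {Ω Θ : Type*} [mΩ' : MeasurableSpace Ω]
    [mΘ' : MeasurableSpace Θ] {κ : Ω → Measure Θ} (hκ : Measurable κ)
    (hκ1 : ∀ ω, κ ω Set.univ ≤ 1) {F : Ω → Θ → ℝ≥0∞}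
    (hF : Measurable (Function.uncurry F)) :
    Measurable fun ω => ∫⁻ t, F ω t ∂κ ω := by
  let K : Kernel Ω Θ := ⟨κ, hκ⟩
  haveI : IsFiniteKernel K := ⟨⟨1, ENNReal.one_lt_top, fun ω => hκ1 ω⟩⟩
  exact hF.lintegral_kernel_prod_right (κ := K)

lemma indicator_mul_lintegral {Ω : Type*} [MeasurableSpace Ω] (P : Measure Ω)
    {S : Set Ω} (hS : MeasurableSet S) (u : Ω → ℝ≥0∞) :
    ∫⁻ ω in S, u ω ∂P = ∫⁻ ω, S.indicator 1 ω * u ω ∂P := by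
  rw [← lintegral_indicator hS]
  congr 1; funext ω; by_cases h : ω ∈ S <;> simp [h]

/-- the key disintegration lemma: if the conditional distribution of `Y` given the
sub-σ-algebra (the ambient instance `m'`) is the kernel `κ`, in the sense of the
rectangle identity `hrect`, then one can integrate out `Y` against `κ` in any jointly
measurable functional. -/
lemma disint {Ω E : Type*} {mbig : MeasurableSpace Ω} [mE : MeasurableSpace E]
    [m' : MeasurableSpace Ω] (hm' : m' ≤ mbig) (P : @Measure Ω mbig)
    [hPP : IsProbabilityMeasure P]
    {Y : Ω → E} (hY : Measurable[mbig] Y)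
    {κ : Ω → Measure E} (hκ : ∀ A : Set E, MeasurableSet A → Measurable fun ω => κ ω A)
    (hκ1 : ∀ ω, κ ω Set.univ ≤ 1)
    (hrect : ∀ B : Set E, MeasurableSet B → ∀ S : Set Ω, MeasurableSet S →
      ∫⁻ ω in S, B.indicator 1 (Y ω) ∂P = ∫⁻ ω in S, κ ω B ∂P)
    {Ψ : Ω → E → ℝ≥0∞} (hΨ : Measurable (Function.uncurry Ψ)) :
    ∫⁻ ω, Ψ ω (Y ω) ∂P = ∫⁻ ω, ∫⁻ e, Ψ ω e ∂(κ ω) ∂P := by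
  let κ' : Kernel Ω E := ⟨κ, Measure.measurable_of_measurable_coe _ hκ⟩
  haveI : IsFiniteKernel κ' := ⟨⟨1, ENNReal.one_lt_top, fun ω => hκ1 ω⟩⟩
  set Q := P.trim hm' with hQ
  haveI : IsProbabilityMeasure Q := by
    constructor
    rw [hQ, trim_measurableSet_eq hm' MeasurableSet.univ]
    exact measure_univ
  have hmapm : Measurable[mbig] (fun ω => (ω, Y ω)) :=
    Measurable.prodMk (measurable_id'' hm') hY
  set ν₁ : Measure (Ω × E) := @Measure.map Ω (Ω × E) mbig _ (fun ω => (ω, Y ω)) P with hν₁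
  set ν₂ : Measure (Ω × E) := Q.compProd κ' with hν₂
  haveI : IsProbabilityMeasure ν₁ := Measure.isProbabilityMeasure_map (μ := P) hmapm.aemeasurable
  have hprod : ∀ S B, MeasurableSet S → MeasurableSet B → ν₁ (S ×ˢ B) = ν₂ (S ×ˢ B) := by
    intro S B hS hB
    rw [hν₁, @Measure.map_apply Ω (Ω × E) mbig _ P _ hmapm _ (hS.prod hB)]
    have hpre : (fun ω => (ω, Y ω)) ⁻¹' (S ×ˢ B) = S ∩ Y ⁻¹' B := by
      ext ω; simp [Set.mem_prod]
    rw [hpre]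
    have h1 : ∫⁻ ω in S, B.indicator 1 (Y ω) ∂P = P (S ∩ Y ⁻¹' B) := by
      have heq : ∀ ω, B.indicator (1 : E → ℝ≥0∞) (Y ω) = (Y ⁻¹' B).indicator 1 ω := by
        intro ω; by_cases h : Y ω ∈ B <;> simp [h]
      rw [lintegral_congr heq]
      rw [lintegral_indicator_one (hY hB)]
      rw [Measure.restrict_apply (hY hB), Set.inter_comm]
    have h2 : ν₂ (S ×ˢ B) = ∫⁻ ω in S, κ ω B ∂P := by
      rw [hν₂, Measure.compProd_apply_prod hS hB]
      have hmeas' : Measurable (S.indicator fun ω => κ ω B) := (hκ B hB).indicator hS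
      calc ∫⁻ ω in S, κ' ω B ∂Q = ∫⁻ ω, S.indicator (fun ω => κ ω B) ω ∂Q := by
            rw [lintegral_indicator hS]; rfl
        _ = ∫⁻ ω, S.indicator (fun ω => κ ω B) ω ∂P := lintegral_trim hm' hmeas'
        _ = ∫⁻ ω in S, κ ω B ∂P := lintegral_indicator (hm' S hS) _
    rw [h2, ← h1, ← hrect B hB S hS]
  have hext : ν₁ = ν₂ := by
    refine MeasureTheory.ext_of_generate_finite _ generateFrom_prod.symm isPiSystem_prod ?_ ?_
    · rintro _ ⟨S, hS, B, hB, rfl⟩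
      exact hprod S B hS hB
    · have := hprod Set.univ Set.univ MeasurableSet.univ MeasurableSet.univ
      simpa [Set.univ_prod_univ] using this
  calc ∫⁻ ω, Ψ ω (Y ω) ∂P = ∫⁻ p, Function.uncurry Ψ p ∂ν₁ := by
        rw [hν₁, @lintegral_map Ω (Ω × E) mbig _ P _ _ hΨ hmapm]
        simp only [Function.uncurry_apply_pair]
    _ = ∫⁻ p, Function.uncurry Ψ p ∂ν₂ := by rw [hext]
    _ = ∫⁻ ω, ∫⁻ e, Ψ ω e ∂(κ' ω) ∂Q := Measure.lintegral_compProd hΨ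
    _ = ∫⁻ ω, ∫⁻ e, Ψ ω e ∂(κ ω) ∂P :=
        lintegral_trim hm' (hΨ.lintegral_kernel_prod_right (κ := κ'))

/-- convert a conditional-expectation identity into a family of set-lintegral identities -/
lemma lint_rect {Ω : Type*} {m' : MeasurableSpace Ω} [mΩ : MeasurableSpace Ω]
    (hm' : m' ≤ mΩ) (P : Measure Ω) [IsProbabilityMeasure P]
    {u : Ω → ℝ≥0∞} (hu : Measurable u) (hu1 : ∀ ω, u ω ≤ 1)
    {v : Ω → ℝ≥0∞} (hv : Measurable v) (hv1 : ∀ ω, v ω ≤ 1)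
    (h : (fun ω => (u ω).toReal) =ᵐ[P] P[fun ω => (v ω).toReal | m']) :
    ∀ S : Set Ω, MeasurableSet[m'] S → ∫⁻ ω in S, v ω ∂P = ∫⁻ ω in S, u ω ∂P := by
  haveI : IsFiniteMeasure (P.trim hm') :=
    ⟨by rw [trim_measurableSet_eq hm' MeasurableSet.univ]; exact measure_lt_top P _⟩
  intro S hS
  have toReal_le_one : ∀ (w : Ω → ℝ≥0∞), (∀ ω, w ω ≤ 1) → ∀ ω, (w ω).toReal ≤ 1 := by
    intro w hw ω
    have := ENNReal.toReal_mono ENNReal.one_ne_top (hw ω)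
    simpa using this
  have hvint : Integrable (fun ω => (v ω).toReal) P := by
    refine Integrable.mono' (integrable_const (1 : ℝ)) hv.ennreal_toReal.aestronglyMeasurable ?_
    refine Eventually.of_forall fun ω => ?_
    rw [Real.norm_eq_abs, abs_of_nonneg ENNReal.toReal_nonneg]
    exact toReal_le_one v hv1 ω
  have h1 := setIntegral_condExp hm' hvint hS
  have h2 : ∫ ω in S, (u ω).toReal ∂P = ∫ ω in S, (v ω).toReal ∂P := by
    rw [← h1]
    exact integral_congr_ae (ae_restrict_of_ae h)
  have key : ∀ (w : Ω → ℝ≥0∞), Measurable w → (∀ ω, w ω ≤ 1) →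
      ∫ ω in S, (w ω).toReal ∂P = (∫⁻ ω in S, w ω ∂P).toReal := by
    intro w hw hw1
    exact integral_toReal hw.aemeasurable
      (Eventually.of_forall fun ω => lt_of_le_of_lt (hw1 ω) ENNReal.one_lt_top)
  have hfin : ∀ (w : Ω → ℝ≥0∞), (∀ ω, w ω ≤ 1) → ∫⁻ ω in S, w ω ∂P ≠ ∞ := by
    intro w hw1
    have : ∫⁻ ω in S, w ω ∂P ≤ ∫⁻ _ in S, 1 ∂P := lintegral_mono hw1
    simp only [lintegral_const, one_mul] at this
    exact ne_top_of_le_ne_top (by finiteness) this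
  have := h2
  rw [key u hu hu1, key v hv hv1] at this
  exact (ENNReal.toReal_eq_toReal_iff' (hfin v hv1) (hfin u hu1)).mp this.symm

section Model
variable {Ω 𝕏 Θ : Type*} [mΩ : MeasurableSpace Ω] [m𝕏 : MeasurableSpace 𝕏]
  [mΘ : MeasurableSpace Θ] (M : NewtonModel Ω 𝕏 Θ)

lemma NM.F_le (n : ℕ) : M.F n ≤ mΩ := by
  rw [M.F_def]
  exact iSup₂_le fun i _ => (M.meas_X i).comap_le

lemma NM.F_mono {n m : ℕ} (h : n ≤ m) : M.F n ≤ M.F m := by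
  rw [M.F_def, M.F_def]
  exact biSup_mono fun i hi => ⟨hi.1, hi.2.trans h⟩

lemma NM.X_meas_F {i n : ℕ} (h1 : 1 ≤ i) (h2 : i ≤ n) : Measurable[M.F n] (M.X i) := by
  apply Measurable.of_comap_le
  rw [M.F_def]
  exact le_iSup₂ (f := fun i (_ : i ∈ Set.Icc 1 n) => MeasurableSpace.comap (M.X i) m𝕏)
    i ⟨h1, h2⟩

/-- the conditioning σ-algebra in `cond_X` -/
def NM.Gsig (n : ℕ) : MeasurableSpace Ω :=
  (⨆ k, MeasurableSpace.comap (M.th k) mΘ) ⊔ M.F n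

lemma NM.Gsig_le (n : ℕ) : NM.Gsig M n ≤ mΩ :=
  sup_le (iSup_le fun k => (M.meas_th k).comap_le) (NM.F_le M n)

lemma NM.F_le_Gsig (n : ℕ) : M.F n ≤ NM.Gsig M n := le_sup_right

lemma NM.th_meas_Gsig (k n : ℕ) : Measurable[NM.Gsig M n] (M.th k) :=
  Measurable.of_comap_le ((le_iSup (fun k => MeasurableSpace.comap (M.th k) mΘ) k).trans
    le_sup_left)

lemma NM.G_mass_le : ∀ n ω, M.G n ω Set.univ ≤ 1 := by
  intro n
  induction n with
  | zero =>
    intro ω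
    rw [M.G_zero]
    haveI := M.probG0
    simp
  | succ n ih =>
    intro ω
    rw [M.G_rec]
    have hα := M.α_mem (n + 1)
    have h1 : ENNReal.ofReal (1 - M.α (n + 1)) + ENNReal.ofReal (M.α (n + 1)) = 1 := by
      rw [← ENNReal.ofReal_add (by linarith [hα.2]) (le_of_lt hα.1)]
      norm_num
    simp only [Measure.coe_add, Pi.add_apply, Measure.smul_apply, smul_eq_mul]
    rw [withDensity_apply _ MeasurableSet.univ, setLIntegral_univ]
    calc ENNReal.ofReal (1 - M.α (n + 1)) * M.G n ω Set.univ +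
          ENNReal.ofReal (M.α (n + 1)) *
            ((∫⁻ t, M.f (M.X (n + 1) ω) t ∂M.G n ω)⁻¹ *
              ∫⁻ t, M.f (M.X (n + 1) ω) t ∂M.G n ω)
        ≤ ENNReal.ofReal (1 - M.α (n + 1)) * 1 + ENNReal.ofReal (M.α (n + 1)) * 1 := by
          gcongr
          · exact ih ω
          · exact ennreal_inv_mul_self_le_one _
      _ = 1 := by rw [mul_one, mul_one, h1]

lemma NM.G_le_one (n : ℕ) (ω : Ω) (A : Set Θ) : M.G n ω A ≤ 1 :=
  le_trans (measure_mono (Set.subset_univ A)) (NM.G_mass_le M n ω)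

lemma NM.isFiniteG (n : ℕ) (ω : Ω) : IsFiniteMeasure (M.G n ω) :=
  ⟨lt_of_le_of_lt (NM.G_mass_le M n ω) ENNReal.one_lt_top⟩

end Model

section Model2
variable {Ω 𝕏 Θ : Type*} [mΩ : MeasurableSpace Ω] [m𝕏 : MeasurableSpace 𝕏]
  [mΘ : MeasurableSpace Θ] (M : NewtonModel Ω 𝕏 Θ)

lemma NM.measG : ∀ n, Measurable[M.F n] (M.G n) := by
  intro n
  induction n with
  | zero =>
    have h : M.G 0 = fun _ => M.G0 := funext (M.G_zero)
    rw [h]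
    exact measurable_const
  | succ n ih =>
    have hFn : M.F n ≤ M.F (n + 1) := NM.F_mono M (Nat.le_succ n)
    let K : Kernel[M.F (n+1)] Ω Θ := @Kernel.mk Ω Θ (M.F (n+1)) mΘ (M.G n) (ih.mono hFn le_rfl)
    have hK : ⇑K = M.G n := rfl
    haveI : @IsFiniteKernel Ω Θ (M.F (n+1)) mΘ K :=
      ⟨⟨1, ENNReal.one_lt_top, fun ω => by rw [hK]; exact NM.G_mass_le M n ω⟩⟩
    have hX : Measurable[M.F (n+1)] (M.X (n+1)) :=
      NM.X_meas_F M (Nat.succ_le_succ (Nat.zero_le n)) le_rfl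
    have hft : @Measurable (Ω × Θ) ℝ≥0∞ ((M.F (n+1)).prod mΘ) _
        (fun p => M.f (M.X (n+1) p.1) p.2) :=
      M.meas_f.comp ((hX.comp measurable_fst).prodMk measurable_snd)
    have hc : Measurable[M.F (n+1)]
        (fun ω => ∫⁻ t, M.f (M.X (n+1) ω) t ∂(M.G n ω)) := by
      have := Measurable.lintegral_kernel_prod_right (κ := K)
        (f := fun ω t => M.f (M.X (n+1) ω) t) hft
      rwa [hK] at this
    apply @Measure.measurable_of_measurable_coe Θ Ω mΘ (M.F (n+1))
    intro A hA
    have hGrec : (fun ω => M.G (n+1) ω A) = fun ω =>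
        ENNReal.ofReal (1 - M.α (n + 1)) * M.G n ω A +
        ENNReal.ofReal (M.α (n + 1)) *
          ((∫⁻ t, M.f (M.X (n + 1) ω) t ∂(M.G n ω))⁻¹ *
            ∫⁻ t in A, M.f (M.X (n + 1) ω) t ∂(M.G n ω)) := by
      funext ω
      rw [M.G_rec]
      simp only [Measure.coe_add, Pi.add_apply, Measure.smul_apply, smul_eq_mul]
      rw [withDensity_apply _ hA]
    rw [hGrec]
    have hGA : Measurable[M.F (n+1)] (fun ω => M.G n ω A) := by
      have := Kernel.measurable_coe K hA
      rwa [hK] at this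
    have hw : Measurable[M.F (n+1)]
        (fun ω => ∫⁻ t in A, M.f (M.X (n + 1) ω) t ∂(M.G n ω)) := by
      have heq : (fun ω => ∫⁻ t in A, M.f (M.X (n + 1) ω) t ∂(M.G n ω)) =
          fun ω => ∫⁻ t, A.indicator (fun t => M.f (M.X (n + 1) ω) t) t ∂(M.G n ω) := by
        funext ω
        rw [lintegral_indicator hA]
      rw [heq]
      have key := Measurable.lintegral_kernel_prod_right (κ := K)
        (f := fun ω t => A.indicator (fun t => M.f (M.X (n+1) ω) t) t)
      rw [hK] at key
      refine key ?_
      have : (Function.uncurry fun ω t => A.indicator (fun t => M.f (M.X (n+1) ω) t) t) =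
          (Prod.snd ⁻¹' A).indicator (fun p => M.f (M.X (n+1) p.1) p.2) := by
        funext p
        by_cases h : p.2 ∈ A <;>
          simp [Function.uncurry, Set.indicator_of_mem, Set.indicator_of_notMem, h]
      rw [this]
      exact hft.indicator (measurable_snd hA)
    exact (measurable_const.mul hGA).add (measurable_const.mul (hc.inv.mul hw))

lemma NM.measG_set (n : ℕ) {A : Set Θ} (hA : MeasurableSet A) :
    Measurable[M.F n] (fun ω => M.G n ω A) :=
  (Measure.measurable_coe hA).comp (NM.measG M n)

end Model2

section Model3
variable {Ω 𝕏 Θ : Type*} [mΩ : MeasurableSpace Ω] [m𝕏 : MeasurableSpace 𝕏]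
  [mΘ : MeasurableSpace Θ] (M : NewtonModel Ω 𝕏 Θ)

lemma NM.f_slice_meas {B : Set 𝕏} (hB : MeasurableSet B) :
    Measurable fun t => ∫⁻ x in B, M.f x t ∂M.μ := by
  haveI := M.sfin
  have h : (fun t => ∫⁻ x in B, M.f x t ∂M.μ) =
      fun t => ∫⁻ x, B.indicator (fun x => M.f x t) x ∂M.μ :=
    funext fun t => (lintegral_indicator hB _).symm
  rw [h]
  apply Measurable.lintegral_prod_right' (f := fun p : Θ × 𝕏 =>
    B.indicator (fun x => M.f x p.1) p.2)
  have h2 : (fun p : Θ × 𝕏 => B.indicator (fun x => M.f x p.1) p.2) =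
      (Prod.snd ⁻¹' B).indicator (fun p : Θ × 𝕏 => M.f p.2 p.1) := by
    funext p
    by_cases hp : p.2 ∈ B <;> simp [hp]
  rw [h2]
  exact (M.meas_f.comp measurable_swap).indicator (measurable_snd hB)

lemma NM.f_slice_le_one (B : Set 𝕏) (t : Θ) : ∫⁻ x in B, M.f x t ∂M.μ ≤ 1 := by
  refine le_trans (setLIntegral_le_lintegral B _) ?_
  rw [M.f_dens t]

lemma NM.indicator_toReal {γ : Type*} (A : Set γ) (y : γ) :
    (A.indicator (1 : γ → ℝ≥0∞) y).toReal = A.indicator (fun _ => (1 : ℝ)) y := by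
  by_cases h : y ∈ A <;> simp [h]

lemma NM.cond_th_rect (m : ℕ) {A : Set Θ} (hA : MeasurableSet A) :
    ∀ S : Set Ω, MeasurableSet[M.F m] S →
      ∫⁻ ω in S, A.indicator 1 (M.th (m+1) ω) ∂M.P = ∫⁻ ω in S, M.G m ω A ∂M.P := by
  haveI := M.probP
  refine lint_rect (NM.F_le M m) M.P
    (u := fun ω => M.G m ω A) ((NM.measG_set M m hA).mono (NM.F_le M m) le_rfl)
    (fun ω => NM.G_le_one M m ω A)
    (v := fun ω => A.indicator 1 (M.th (m+1) ω)) ?_ ?_ ?_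
  · have h : (fun ω => A.indicator (1 : Θ → ℝ≥0∞) (M.th (m+1) ω)) =
        (M.th (m+1) ⁻¹' A).indicator 1 := by
      funext ω; by_cases h : M.th (m+1) ω ∈ A <;> simp [h]
    rw [h]
    exact measurable_one.indicator (M.meas_th (m+1) hA)
  · intro ω; by_cases h : M.th (m+1) ω ∈ A <;> simp [h]
  · have h : (fun ω => ((A.indicator (1 : Θ → ℝ≥0∞) (M.th (m+1) ω))).toReal) =
        fun ω => A.indicator (fun _ => (1 : ℝ)) (M.th (m+1) ω) :=
      funext fun ω => NM.indicator_toReal A _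
    rw [h]
    exact M.cond_th m A hA

lemma NM.cond_X_rect (m : ℕ) {B : Set 𝕏} (hB : MeasurableSet B) :
    ∀ S : Set Ω, MeasurableSet[NM.Gsig M m] S →
      ∫⁻ ω in S, B.indicator 1 (M.X (m+1) ω) ∂M.P =
        ∫⁻ ω in S, (∫⁻ x in B, M.f x (M.th (m+1) ω) ∂M.μ) ∂M.P := by
  haveI := M.probP
  refine lint_rect (NM.Gsig_le M m) M.P
    (u := fun ω => ∫⁻ x in B, M.f x (M.th (m+1) ω) ∂M.μ)
    ((NM.f_slice_meas M hB).comp (M.meas_th (m+1)))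
    (fun ω => NM.f_slice_le_one M B _)
    (v := fun ω => B.indicator 1 (M.X (m+1) ω)) ?_ ?_ ?_
  · have h : (fun ω => B.indicator (1 : 𝕏 → ℝ≥0∞) (M.X (m+1) ω)) =
        (M.X (m+1) ⁻¹' B).indicator 1 := by
      funext ω; by_cases h : M.X (m+1) ω ∈ B <;> simp [h]
    rw [h]
    exact measurable_one.indicator (M.meas_X (m+1) hB)
  · intro ω; by_cases h : M.X (m+1) ω ∈ B <;> simp [h]
  · have h : (fun ω => ((B.indicator (1 : 𝕏 → ℝ≥0∞) (M.X (m+1) ω))).toReal) =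
        fun ω => B.indicator (fun _ => (1 : ℝ)) (M.X (m+1) ω) :=
      funext fun ω => NM.indicator_toReal B _
    rw [h]
    exact M.cond_X m B hB

end Model3

lemma prodmono {A B : Type*} {m1 m1' : MeasurableSpace A} {m2 : MeasurableSpace B}
    (h : m1 ≤ m1') : m1.prod m2 ≤ m1'.prod m2 :=
  sup_le_sup (MeasurableSpace.comap_mono h) le_rfl

lemma meas_indicator_one {γ : Type*} [mγ : MeasurableSpace γ] {S : Set γ}
    (hS : MeasurableSet S) : Measurable (S.indicator (1 : γ → ℝ≥0∞)) :=
  measurable_one.indicator hS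

lemma indicator_ne_top {γ : Type*} (S : Set γ) (ω : γ) :
    S.indicator (1 : γ → ℝ≥0∞) ω ≠ ∞ := by
  by_cases h : ω ∈ S <;> simp [h]

section Model4
variable {Ω 𝕏 Θ : Type*} [mΩ : MeasurableSpace Ω] [m𝕏 : MeasurableSpace 𝕏]
  [mΘ : MeasurableSpace Θ] (M : NewtonModel Ω 𝕏 Θ)

lemma NM.mart_step (m : ℕ) {g : Θ → ℝ≥0∞} (hg : Measurable g) {C : ℝ≥0∞} (hC : C ≠ ∞)
    (hgC : ∀ t, g t ≤ C) {S : Set Ω} (hS : MeasurableSet[M.F m] S) :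
    ∫⁻ ω in S, ∫⁻ t, g t ∂(M.G (m+1) ω) ∂M.P = ∫⁻ ω in S, ∫⁻ t, g t ∂(M.G m ω) ∂M.P := by
  haveI := M.probP
  haveI := M.sfin
  set a := ENNReal.ofReal (1 - M.α (m+1)) with ha
  set b := ENNReal.ofReal (M.α (m+1)) with hb
  -- basic objects
  set q : Ω → 𝕏 → ℝ≥0∞ := fun ω x' => ∫⁻ t, M.f x' t ∂(M.G m ω) with hq
  set r : Ω → 𝕏 → ℝ≥0∞ := fun ω x' => ∫⁻ t, g t * M.f x' t ∂(M.G m ω) with hr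
  set h : Ω → 𝕏 → ℝ≥0∞ := fun ω x' => (q ω x')⁻¹ * r ω x' with hh
  set I : Ω → ℝ≥0∞ := fun ω => ∫⁻ t, g t ∂(M.G m ω) with hI
  set Φ : Ω → ℝ≥0∞ := fun ω => h ω (M.X (m+1) ω) with hΦ
  set H : Ω → Θ → ℝ≥0∞ := fun ω t => ∫⁻ x', h ω x' * M.f x' t ∂M.μ with hH
  have hSΩ : MeasurableSet S := NM.F_le M m S hS
  have hSG : MeasurableSet[NM.Gsig M m] S := NM.F_le_Gsig M m S hS
  -- measurability
  have mGF : Measurable[M.F m] (M.G m) := NM.measG M m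
  have mG : Measurable (M.G m) := mGF.mono (NM.F_le M m) le_rfl
  have mGmass : ∀ ω : Ω, M.G m ω Set.univ ≤ 1 := NM.G_mass_le M m
  have mqF : @Measurable (Ω × 𝕏) ℝ≥0∞ ((M.F m).prod m𝕏) _ (Function.uncurry q) := by
    refine @measurable_lintegral_kernel (Ω × 𝕏) Θ ((M.F m).prod m𝕏) mΘ
      (fun p => M.G m p.1) (mGF.comp measurable_fst) (fun p => mGmass p.1)
      (fun p t => M.f p.2 t) ?_
    exact M.meas_f.comp (((measurable_snd.comp measurable_fst)).prodMk measurable_snd)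
  have mrF : @Measurable (Ω × 𝕏) ℝ≥0∞ ((M.F m).prod m𝕏) _ (Function.uncurry r) := by
    refine @measurable_lintegral_kernel (Ω × 𝕏) Θ ((M.F m).prod m𝕏) mΘ
      (fun p => M.G m p.1) (mGF.comp measurable_fst) (fun p => mGmass p.1)
      (fun p t => g t * M.f p.2 t) ?_
    exact (hg.comp measurable_snd).mul
      (M.meas_f.comp (((measurable_snd.comp measurable_fst)).prodMk measurable_snd))
  have mhF : @Measurable (Ω × 𝕏) ℝ≥0∞ ((M.F m).prod m𝕏) _ (Function.uncurry h) :=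
    mqF.inv.mul mrF
  have mh : Measurable (Function.uncurry h) :=
    mhF.mono (prodmono (NM.F_le M m)) le_rfl
  have mI : Measurable I := by
    refine measurable_lintegral_kernel mG mGmass (F := fun ω t => g t) ?_
    exact hg.comp measurable_snd
  have mΦ : Measurable Φ :=
    mh.comp (measurable_id.prodMk (M.meas_X (m+1)))
  have mfx : ∀ x' : 𝕏, Measurable (fun t => M.f x' t) := fun x' =>
    M.meas_f.comp (measurable_const.prodMk measurable_id)
  have mft : ∀ t : Θ, Measurable (fun x' => M.f x' t) := fun t =>
    M.meas_f.comp (measurable_id.prodMk measurable_const)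
  have mhω : ∀ ω, Measurable (h ω) := fun ω =>
    mh.comp (measurable_const.prodMk measurable_id)
  -- pointwise expansion of the recursion
  have hexp : ∀ ω : Ω, ∫⁻ t, g t ∂(M.G (m+1) ω) = a * I ω + b * Φ ω := by
    intro ω
    rw [M.G_rec]
    rw [lintegral_add_measure, lintegral_smul_measure, lintegral_smul_measure,
      lintegral_smul_measure]
    congr 1
    rw [lintegral_withDensity_eq_lintegral_mul _ (mfx (M.X (m+1) ω)) hg]
    have : ∫⁻ t, ((fun t => M.f (M.X (m+1) ω) t) * g) t ∂(M.G m ω) = r ω (M.X (m+1) ω) := by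
      rw [hr]
      exact lintegral_congr fun t => mul_comm _ _
    rw [this, hΦ, hh]
    rfl
  have hexpfun : (fun ω => ∫⁻ t, g t ∂(M.G (m+1) ω)) = fun ω => a * I ω + b * Φ ω :=
    funext hexp
  -- the core identity
  have hcore : ∫⁻ ω in S, Φ ω ∂M.P = ∫⁻ ω in S, I ω ∂M.P := by
    -- step (i): integrate out `X (m+1)` given `Gsig m`
    set Ψ₁ : Ω → 𝕏 → ℝ≥0∞ := fun ω x' => S.indicator 1 ω * h ω x' with hΨ₁def
    have hΨ₁ : @Measurable (Ω × 𝕏) ℝ≥0∞ ((NM.Gsig M m).prod m𝕏) _ (Function.uncurry Ψ₁) := by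
      have h1 : Measurable[NM.Gsig M m] (S.indicator (1 : Ω → ℝ≥0∞)) :=
        @meas_indicator_one Ω (NM.Gsig M m) S hSG
      have hind : @Measurable (Ω × 𝕏) ℝ≥0∞ ((NM.Gsig M m).prod m𝕏) _
          (fun p => S.indicator 1 p.1) :=
        h1.comp (@measurable_fst Ω 𝕏 (NM.Gsig M m) m𝕏)
      exact hind.mul (mhF.mono (prodmono (NM.F_le_Gsig M m)) le_rfl)
    set κ₁ : Ω → Measure 𝕏 := fun ω => M.μ.withDensity (fun x' => M.f x' (M.th (m+1) ω))
      with hκ₁def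
    have hκ₁ : ∀ B : Set 𝕏, MeasurableSet B →
        Measurable[NM.Gsig M m] fun ω => κ₁ ω B := by
      intro B hB
      have : (fun ω => κ₁ ω B) = (fun t => ∫⁻ x in B, M.f x t ∂M.μ) ∘ M.th (m+1) := by
        funext ω
        rw [hκ₁def]
        exact withDensity_apply _ hB
      rw [this]
      exact ((NM.f_slice_meas M hB).comp (NM.th_meas_Gsig M (m+1) m))
    have hκ₁1 : ∀ ω, κ₁ ω Set.univ ≤ 1 := by
      intro ω
      rw [hκ₁def, withDensity_apply _ MeasurableSet.univ, setLIntegral_univ, M.f_dens]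
    have hrect₁ : ∀ B : Set 𝕏, MeasurableSet B → ∀ S' : Set Ω,
        MeasurableSet[NM.Gsig M m] S' →
        ∫⁻ ω in S', B.indicator 1 (M.X (m+1) ω) ∂M.P = ∫⁻ ω in S', κ₁ ω B ∂M.P := by
      intro B hB S' hS'
      have : ∀ ω, κ₁ ω B = ∫⁻ x in B, M.f x (M.th (m+1) ω) ∂M.μ := fun ω =>
        withDensity_apply _ hB
      rw [lintegral_congr fun ω => this ω]
      exact NM.cond_X_rect M m hB S' hS'
    have happ₁ := @disint Ω 𝕏 mΩ m𝕏 (NM.Gsig M m) (NM.Gsig_le M m) M.P M.probP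
      (M.X (m+1)) (M.meas_X (m+1)) κ₁ hκ₁ hκ₁1 hrect₁ Ψ₁ hΨ₁
    -- step (ii): integrate out `th (m+1)` given `F m`
    set Ψ₂ : Ω → Θ → ℝ≥0∞ := fun ω t => S.indicator 1 ω * H ω t with hΨ₂def
    have hHF : @Measurable (Ω × Θ) ℝ≥0∞ ((M.F m).prod mΘ) _ (Function.uncurry H) := by
      refine @Measurable.lintegral_prod_right' (Ω × Θ) 𝕏 ((M.F m).prod mΘ) m𝕏 M.μ _
        (fun pp : (Ω × Θ) × 𝕏 => h pp.1.1 pp.2 * M.f pp.2 pp.1.2) ?_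
      refine Measurable.mul ?_ ?_
      · exact mhF.comp ((measurable_fst.comp measurable_fst).prodMk measurable_snd)
      · exact M.meas_f.comp (measurable_snd.prodMk (measurable_snd.comp measurable_fst))
    have hΨ₂ : @Measurable (Ω × Θ) ℝ≥0∞ ((M.F m).prod mΘ) _ (Function.uncurry Ψ₂) := by
      have h1 : Measurable[M.F m] (S.indicator (1 : Ω → ℝ≥0∞)) :=
        @meas_indicator_one Ω (M.F m) S hS
      have hind : @Measurable (Ω × Θ) ℝ≥0∞ ((M.F m).prod mΘ) _
          (fun p => S.indicator 1 p.1) :=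
        h1.comp (@measurable_fst Ω Θ (M.F m) mΘ)
      exact hind.mul hHF
    have happ₂ := @disint Ω Θ mΩ mΘ (M.F m) (NM.F_le M m) M.P M.probP
      (M.th (m+1)) (M.meas_th (m+1)) (M.G m) (fun A hA => NM.measG_set M m hA)
      mGmass (fun A hA S' hS' => NM.cond_th_rect M m hA S' hS') Ψ₂ hΨ₂
    -- step (iii): pointwise computation
    have hpoint : ∀ ω : Ω, ∫⁻ t, H ω t ∂(M.G m ω) = I ω := by
      intro ω
      haveI : IsFiniteMeasure (M.G m ω) := NM.isFiniteG M m ω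
      have swap1 : ∫⁻ t, ∫⁻ x', h ω x' * M.f x' t ∂M.μ ∂(M.G m ω) =
          ∫⁻ x', ∫⁻ t, h ω x' * M.f x' t ∂(M.G m ω) ∂M.μ := by
        refine lintegral_lintegral_swap ?_
        exact (((mhω ω).comp measurable_snd).mul
          (M.meas_f.comp (measurable_snd.prodMk measurable_fst))).aemeasurable
      have inner1 : ∀ x', ∫⁻ t, h ω x' * M.f x' t ∂(M.G m ω) = h ω x' * q ω x' := by
        intro x'
        rw [lintegral_const_mul _ (mfx x')]
      have swapq : ∫⁻ x', q ω x' ∂M.μ = M.G m ω Set.univ := by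
        rw [hq]
        have : ∫⁻ x', ∫⁻ t, M.f x' t ∂(M.G m ω) ∂M.μ =
            ∫⁻ t, ∫⁻ x', M.f x' t ∂M.μ ∂(M.G m ω) := by
          refine lintegral_lintegral_swap ?_
          exact (M.meas_f.comp (measurable_fst.prodMk measurable_snd)).aemeasurable
        rw [this]
        simp_rw [M.f_dens]
        simp
      have haq : ∀ᵐ x' ∂M.μ, q ω x' < ∞ := by
        refine ae_lt_top ?_ ?_
        · exact mqF.mono (prodmono (NM.F_le M m)) le_rfl |>.comp
            (measurable_const.prodMk measurable_id)
        · rw [swapq]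
          exact ne_top_of_le_ne_top ENNReal.one_ne_top (mGmass ω)
      have hr_le : ∀ x', r ω x' ≤ C * q ω x' := by
        intro x'
        rw [hr, hq, ← lintegral_const_mul _ (mfx x')]
        exact lintegral_mono fun t => mul_le_mul_left (hgC t) _
      have hae : (fun x' => h ω x' * q ω x') =ᵐ[M.μ] fun x' => r ω x' := by
        filter_upwards [haq] with x' hx'
        rw [hh]
        refine ennreal_inv_mul_mul (q ω x') (r ω x') hx'.ne ?_
        intro h0
        have := hr_le x'
        rw [h0, mul_zero] at this
        exact le_antisymm this zero_le
      have swap2 : ∫⁻ x', r ω x' ∂M.μ = I ω := by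
        rw [hr, hI]
        have : ∫⁻ x', ∫⁻ t, g t * M.f x' t ∂(M.G m ω) ∂M.μ =
            ∫⁻ t, ∫⁻ x', g t * M.f x' t ∂M.μ ∂(M.G m ω) := by
          refine lintegral_lintegral_swap ?_
          exact ((hg.comp measurable_snd).mul
            (M.meas_f.comp (measurable_fst.prodMk measurable_snd))).aemeasurable
        rw [this]
        refine lintegral_congr fun t => ?_
        rw [lintegral_const_mul _ (mft t), M.f_dens, mul_one]
      calc ∫⁻ t, H ω t ∂(M.G m ω) = ∫⁻ x', ∫⁻ t, h ω x' * M.f x' t ∂(M.G m ω) ∂M.μ := swap1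
        _ = ∫⁻ x', h ω x' * q ω x' ∂M.μ := lintegral_congr inner1
        _ = ∫⁻ x', r ω x' ∂M.μ := lintegral_congr_ae hae
        _ = I ω := swap2
    -- assemble the chain
    have e1 : ∫⁻ ω in S, Φ ω ∂M.P = ∫⁻ ω, Ψ₁ ω (M.X (m+1) ω) ∂M.P := by
      rw [indicator_mul_lintegral M.P hSΩ Φ]
    have e2 : ∀ ω, ∫⁻ x', Ψ₁ ω x' ∂(κ₁ ω) = Ψ₂ ω (M.th (m+1) ω) := by
      intro ω
      simp only [hΨ₂def, hΨ₁def]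
      rw [lintegral_const_mul' _ _ (indicator_ne_top S ω)]
      congr 1
      rw [hκ₁def, lintegral_withDensity_eq_lintegral_mul _
        (mft (M.th (m+1) ω)) (mhω ω)]
      simp only [hH]
      refine lintegral_congr fun x' => ?_
      rw [Pi.mul_apply, mul_comm]
    have e3 : ∀ ω, ∫⁻ t, Ψ₂ ω t ∂(M.G m ω) = S.indicator 1 ω * I ω := by
      intro ω
      simp only [hΨ₂def]
      rw [lintegral_const_mul' _ _ (indicator_ne_top S ω), hpoint ω]
    have e1 : ∫⁻ ω in S, Φ ω ∂M.P = ∫⁻ ω, Ψ₁ ω (M.X (m+1) ω) ∂M.P := by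
      rw [indicator_mul_lintegral M.P hSΩ Φ]
    calc ∫⁻ ω in S, Φ ω ∂M.P = ∫⁻ ω, Ψ₁ ω (M.X (m+1) ω) ∂M.P := e1
      _ = ∫⁻ ω, ∫⁻ x', Ψ₁ ω x' ∂(κ₁ ω) ∂M.P := happ₁
      _ = ∫⁻ ω, Ψ₂ ω (M.th (m+1) ω) ∂M.P := lintegral_congr e2
      _ = ∫⁻ ω, ∫⁻ t, Ψ₂ ω t ∂(M.G m ω) ∂M.P := happ₂
      _ = ∫⁻ ω, S.indicator 1 ω * I ω ∂M.P := lintegral_congr e3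
      _ = ∫⁻ ω in S, I ω ∂M.P := (indicator_mul_lintegral M.P hSΩ I).symm
  -- conclusion
  have h1 : a + b = 1 := by
    have hα := M.α_mem (m + 1)
    rw [ha, hb, ← ENNReal.ofReal_add (by linarith [hα.2]) (le_of_lt hα.1)]
    norm_num
  rw [hexpfun]
  rw [lintegral_add_left (mI.const_mul a)]
  rw [lintegral_const_mul a mI, lintegral_const_mul b mΦ, hcore, ← add_mul, h1, one_mul]

end Model4

section Model5
variable {Ω 𝕏 Θ : Type*} [mΩ : MeasurableSpace Ω] [m𝕏 : MeasurableSpace 𝕏]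
  [mΘ : MeasurableSpace Θ] (M : NewtonModel Ω 𝕏 Θ)

lemma NM.mart_iter (n : ℕ) {S : Set Ω} (hS : MeasurableSet[M.F n] S)
    {g : Θ → ℝ≥0∞} (hg : Measurable g) {C : ℝ≥0∞} (hC : C ≠ ∞) (hgC : ∀ t, g t ≤ C) :
    ∀ m, n ≤ m →
      ∫⁻ ω in S, ∫⁻ t, g t ∂(M.G m ω) ∂M.P = ∫⁻ ω in S, ∫⁻ t, g t ∂(M.G n ω) ∂M.P := by
  intro m hm
  induction m, hm using Nat.le_induction with
  | base => rfl
  | succ m hm ih =>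
    rw [← ih]
    exact NM.mart_step M m hg hC hgC (NM.F_mono M hm S hS)

end Model5

section Model6
variable {Ω 𝕏 Θ : Type*} [mΩ : MeasurableSpace Ω] [m𝕏 : MeasurableSpace 𝕏]
  [MeasurableSpace Θ] [TopologicalSpace Θ] [PolishSpace Θ] [BorelSpace Θ]
  (M : NewtonModel Ω 𝕏 Θ)

/-- the coercion of a nonnegative bounded continuous function to a real one -/
def nnCoe (g' : BoundedContinuousFunction Θ ℝ≥0) : BoundedContinuousFunction Θ ℝ :=
  BoundedContinuousFunction.comp (fun x : ℝ≥0 => (x : ℝ))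
    (LipschitzWith.of_dist_le_mul (K := 1) fun x y => by
      rw [NNReal.dist_eq, Real.dist_eq, NNReal.coe_one, one_mul]) g'

lemma nnCoe_apply (g' : BoundedContinuousFunction Θ ℝ≥0) (t : Θ) :
    nnCoe g' t = (g' t : ℝ) := rfl

lemma lint_eq_ofReal_int (g' : BoundedContinuousFunction Θ ℝ≥0) (ν : Measure Θ)
    [IsFiniteMeasure ν] :
    ∫⁻ t, (g' t : ℝ≥0∞) ∂ν = ENNReal.ofReal (∫ t, nnCoe g' t ∂ν) := by
  have h1 := BoundedContinuousFunction.toReal_lintegral_coe_eq_integral g' ν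
  have h2 : ∫ t, (g' t : ℝ) ∂ν = ∫ t, nnCoe g' t ∂ν := by
    refine integral_congr_ae (Eventually.of_forall fun t => ?_)
    rw [nnCoe_apply]
  rw [← h2, ← h1, ENNReal.ofReal_toReal]
  exact (BoundedContinuousFunction.lintegral_lt_top_of_nnreal ν g').ne

lemma NM.lim_rect (Glim : Ω → Measure Θ)
    (hGlim_prob : ∀ ω, IsProbabilityMeasure (Glim ω))
    (hGlim_meas : ∀ A : Set Θ, MeasurableSet A → Measurable fun ω => Glim ω A)
    (hGlim_conv : ∀ᵐ ω ∂M.P, WeakLim (fun n => M.G n ω) (Glim ω))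
    (n : ℕ) {S : Set Ω} (hS : MeasurableSet[M.F n] S)
    {A : Set Θ} (hA : MeasurableSet A) :
    ∫⁻ ω in S, Glim ω A ∂M.P = ∫⁻ ω in S, M.G n ω A ∂M.P := by
  haveI := M.probP
  have hSΩ : MeasurableSet S := NM.F_le M n S hS
  have hGlimMeas : Measurable Glim := Measure.measurable_of_measurable_coe _ hGlim_meas
  have hGMeas : ∀ m : ℕ, Measurable (M.G m) := fun m =>
    (NM.measG M m).mono (NM.F_le M m) le_rfl
  set ν₁ : Measure Θ := (M.P.restrict S).bind Glim with hν₁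
  set ν₂ : Measure Θ := (M.P.restrict S).bind (M.G n) with hν₂
  have hν₁app : ∀ B : Set Θ, MeasurableSet B →
      ν₁ B = ∫⁻ ω in S, Glim ω B ∂M.P := fun B hB =>
    Measure.bind_apply hB hGlimMeas.aemeasurable
  have hν₂app : ∀ B : Set Θ, MeasurableSet B →
      ν₂ B = ∫⁻ ω in S, M.G n ω B ∂M.P := fun B hB =>
    Measure.bind_apply hB (hGMeas n).aemeasurable
  haveI : IsFiniteMeasure ν₁ := by
    constructor
    rw [hν₁app Set.univ MeasurableSet.univ]
    calc ∫⁻ ω in S, Glim ω Set.univ ∂M.P ≤ ∫⁻ _ in S, 1 ∂M.P :=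
          lintegral_mono fun ω => le_of_eq (measure_univ)
      _ = M.P S := setLIntegral_one S
      _ < ∞ := measure_lt_top M.P S
  have key : ∀ g' : BoundedContinuousFunction Θ ℝ≥0,
      ∫⁻ t, (g' t : ℝ≥0∞) ∂ν₁ = ∫⁻ t, (g' t : ℝ≥0∞) ∂ν₂ := by
    intro g'
    have hgm : Measurable fun t => (g' t : ℝ≥0∞) := g'.measurable_coe_ennreal_comp
    rw [hν₁, hν₂, Measure.lintegral_bind hGlimMeas.aemeasurable hgm.aemeasurable,
      Measure.lintegral_bind (hGMeas n).aemeasurable hgm.aemeasurable]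
    set C : ℝ≥0∞ := (nndist 0 g' : ℝ≥0∞) with hCdef
    have hgC : ∀ t, (g' t : ℝ≥0∞) ≤ C := fun t =>
      ENNReal.coe_le_coe.mpr (g'.apply_le_nndist_zero t)
    have hCne : C ≠ ∞ := ENNReal.coe_ne_top
    have hconst : ∀ m, n ≤ m →
        ∫⁻ ω in S, ∫⁻ t, (g' t : ℝ≥0∞) ∂(M.G m ω) ∂M.P =
          ∫⁻ ω in S, ∫⁻ t, (g' t : ℝ≥0∞) ∂(M.G n ω) ∂M.P :=
      NM.mart_iter M n hS hgm hCne hgC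
    have hlim : ∀ᵐ ω ∂(M.P.restrict S),
        Tendsto (fun m => ∫⁻ t, (g' t : ℝ≥0∞) ∂(M.G m ω)) atTop
          (𝓝 (∫⁻ t, (g' t : ℝ≥0∞) ∂(Glim ω))) := by
      refine (ae_restrict_of_ae hGlim_conv).mono fun ω hω => ?_
      haveI : IsProbabilityMeasure (Glim ω) := hGlim_prob ω
      have hconv := hω (nnCoe g')
      have hrw : ∀ m, ∫⁻ t, (g' t : ℝ≥0∞) ∂(M.G m ω) =
          ENNReal.ofReal (∫ t, nnCoe g' t ∂(M.G m ω)) := by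
        intro m
        haveI : IsFiniteMeasure (M.G m ω) := NM.isFiniteG M m ω
        exact lint_eq_ofReal_int g' (M.G m ω)
      have hrwL : ∫⁻ t, (g' t : ℝ≥0∞) ∂(Glim ω) =
          ENNReal.ofReal (∫ t, nnCoe g' t ∂(Glim ω)) := lint_eq_ofReal_int g' (Glim ω)
      rw [hrwL]
      have h3 : Tendsto (fun m => ENNReal.ofReal (∫ t, nnCoe g' t ∂(M.G m ω))) atTop
          (𝓝 (ENNReal.ofReal (∫ t, nnCoe g' t ∂(Glim ω)))) :=
        (ENNReal.continuous_ofReal.tendsto _).comp hconv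
      exact h3.congr fun m => (hrw m).symm
    have htendsto : Tendsto (fun m => ∫⁻ ω in S, ∫⁻ t, (g' t : ℝ≥0∞) ∂(M.G m ω) ∂M.P)
        atTop (𝓝 (∫⁻ ω in S, ∫⁻ t, (g' t : ℝ≥0∞) ∂(Glim ω) ∂M.P)) := by
      refine tendsto_lintegral_of_dominated_convergence (fun _ => C)
        (fun m => ?_) (fun m => ?_) ?_ hlim
      · exact measurable_lintegral_kernel (hGMeas m) (NM.G_mass_le M m)
          (F := fun ω t => (g' t : ℝ≥0∞)) (hgm.comp measurable_snd)
      · refine Eventually.of_forall fun ω => ?_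
        calc ∫⁻ t, (g' t : ℝ≥0∞) ∂(M.G m ω) ≤ ∫⁻ _t, C ∂(M.G m ω) := lintegral_mono hgC
          _ = C * M.G m ω Set.univ := lintegral_const C
          _ ≤ C * 1 := by gcongr; exact NM.G_mass_le M m ω
          _ = C := mul_one C
      · refine ne_top_of_le_ne_top
          (ENNReal.mul_ne_top hCne (measure_lt_top (M.P.restrict S) Set.univ).ne) ?_
        exact le_of_eq (lintegral_const C)
    have hconst' : Tendsto (fun m => ∫⁻ ω in S, ∫⁻ t, (g' t : ℝ≥0∞) ∂(M.G m ω) ∂M.P)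
        atTop (𝓝 (∫⁻ ω in S, ∫⁻ t, (g' t : ℝ≥0∞) ∂(M.G n ω) ∂M.P)) := by
      refine Tendsto.congr' ?_ tendsto_const_nhds
      filter_upwards [eventually_ge_atTop n] with m hm
      exact (hconst m hm).symm
    exact tendsto_nhds_unique htendsto hconst'
  have hext : ν₁ = ν₂ := ext_of_forall_lintegral_eq_of_IsFiniteMeasure key
  rw [← hν₁app A hA, ← hν₂app A hA, hext]

end Model6


/-- In Newton's model, for every `n ≥ 0`, `k ≥ 1` and measurable `A ⊆ Θ`,
`P(θ_{n+k} ∈ A | X_{1:n}) = E(G(A) | X_{1:n})` `P`-a.s., where `G` is the `P`-a.s. weak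
limit of the martingale `(G n)`. -/
theorem newton_predictive_eq_condexp_limit
    {Ω 𝕏 Θ : Type*} [MeasurableSpace Ω]
    [MeasurableSpace 𝕏] [StandardBorelSpace 𝕏]
    [MeasurableSpace Θ] [TopologicalSpace Θ] [PolishSpace Θ] [BorelSpace Θ]
    (M : NewtonModel Ω 𝕏 Θ)
    (Glim : Ω → Measure Θ)
    (hGlim_prob : ∀ ω, IsProbabilityMeasure (Glim ω))
    (hGlim_meas : ∀ A : Set Θ, MeasurableSet A → Measurable fun ω => Glim ω A)
    (hGlim_conv : ∀ᵐ ω ∂M.P, WeakLim (fun n => M.G n ω) (Glim ω)) :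
    ∀ (n k : ℕ), 1 ≤ k → ∀ A : Set Θ, MeasurableSet A →
      M.P[fun ω => A.indicator (fun _ => (1 : ℝ)) (M.th (n + k) ω) | M.F n]
        =ᵐ[M.P] M.P[fun ω => (Glim ω A).toReal | M.F n] := by
  haveI := M.probP
  intro n k hk A hA
  obtain ⟨j, rfl⟩ : ∃ j, k = j + 1 := ⟨k - 1, (Nat.succ_pred_eq_of_pos hk).symm⟩
  set m := n + j with hm
  have hnm : M.F n ≤ M.F m := NM.F_mono M (Nat.le_add_right n j)
  have hind : Measurable (A.indicator (1 : Θ → ℝ≥0∞)) := meas_indicator_one hA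
  have hind_le : ∀ t, A.indicator (1 : Θ → ℝ≥0∞) t ≤ 1 := by
    intro t; by_cases h : t ∈ A <;> simp [h]
  -- the set-lintegral identity
  have hkey : ∀ S : Set Ω, MeasurableSet[M.F n] S →
      ∫⁻ ω in S, A.indicator 1 (M.th (m+1) ω) ∂M.P = ∫⁻ ω in S, Glim ω A ∂M.P := by
    intro S hS
    have h1 := NM.cond_th_rect M m hA S (hnm S hS)
    have h2 : ∫⁻ ω in S, M.G m ω A ∂M.P = ∫⁻ ω in S, M.G n ω A ∂M.P := by
      have h := NM.mart_iter M n hS hind ENNReal.one_ne_top hind_le m (Nat.le_add_right n j)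
      simpa only [lintegral_indicator_one hA] using h
    have h3 := NM.lim_rect M Glim hGlim_prob hGlim_meas hGlim_conv n hS hA
    rw [h1, h2, ← h3]
  -- measurability and integrability of the two integrands
  have humeas : Measurable fun ω => A.indicator (1 : Θ → ℝ≥0∞) (M.th (m+1) ω) :=
    hind.comp (M.meas_th (m+1))
  have hvmeas : Measurable fun ω => Glim ω A := hGlim_meas A hA
  have hv_le : ∀ ω, Glim ω A ≤ 1 := by
    intro ω
    haveI := hGlim_prob ω
    exact prob_le_one
  -- real set-integral identity
  have hreal : ∀ S : Set Ω, MeasurableSet[M.F n] S →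
      ∫ ω in S, A.indicator (fun _ => (1 : ℝ)) (M.th (m+1) ω) ∂M.P
        = ∫ ω in S, (Glim ω A).toReal ∂M.P := by
    intro S hS
    have e1 : ∫ ω in S, A.indicator (fun _ => (1 : ℝ)) (M.th (m+1) ω) ∂M.P
        = (∫⁻ ω in S, A.indicator (1 : Θ → ℝ≥0∞) (M.th (m+1) ω) ∂M.P).toReal := by
      rw [← integral_toReal humeas.aemeasurable
        (Eventually.of_forall fun ω => lt_of_le_of_lt (hind_le _) ENNReal.one_lt_top)]
      refine integral_congr_ae (Eventually.of_forall fun ω => ?_)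
      exact (NM.indicator_toReal A _).symm
    have e2 : ∫ ω in S, (Glim ω A).toReal ∂M.P
        = (∫⁻ ω in S, Glim ω A ∂M.P).toReal := by
      exact integral_toReal hvmeas.aemeasurable
        (Eventually.of_forall fun ω => lt_of_le_of_lt (hv_le ω) ENNReal.one_lt_top)
    rw [e1, e2, hkey S hS]
  -- integrability
  have hint_u : Integrable (fun ω => A.indicator (fun _ => (1 : ℝ)) (M.th (m+1) ω)) M.P := by
    have hm' : Measurable fun ω => A.indicator (fun _ => (1 : ℝ)) (M.th (m+1) ω) := by
      have : (fun ω => A.indicator (fun _ => (1 : ℝ)) (M.th (m+1) ω)) =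
          (M.th (m+1) ⁻¹' A).indicator (fun _ => (1 : ℝ)) := by
        funext ω; by_cases h : M.th (m+1) ω ∈ A <;> simp [h]
      rw [this]
      exact measurable_const.indicator (M.meas_th (m+1) hA)
    refine Integrable.mono' (integrable_const (1 : ℝ)) hm'.aestronglyMeasurable ?_
    refine Eventually.of_forall fun ω => ?_
    by_cases h : M.th (m+1) ω ∈ A <;> simp [h]
  have hint_v : Integrable (fun ω => (Glim ω A).toReal) M.P := by
    refine Integrable.mono' (integrable_const (1 : ℝ)) hvmeas.ennreal_toReal.aestronglyMeasurable ?_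
    refine Eventually.of_forall fun ω => ?_
    rw [Real.norm_eq_abs, abs_of_nonneg ENNReal.toReal_nonneg]
    have := ENNReal.toReal_mono ENNReal.one_ne_top (hv_le ω)
    simpa using this
  haveI : IsFiniteMeasure (M.P.trim (NM.F_le M n)) :=
    ⟨by rw [trim_measurableSet_eq (NM.F_le M n) MeasurableSet.univ]; exact measure_lt_top M.P _⟩
  refine (ae_eq_condExp_of_forall_setIntegral_eq (NM.F_le M n) hint_u
    (fun S hS _ => integrable_condExp.integrableOn) (fun S hS _ => ?_)
    (stronglyMeasurable_condExp.aestronglyMeasurable)).symm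
  rw [setIntegral_condExp (NM.F_le M n) hint_v hS]
  exact (hreal S hS).symm
end
end

section
/- In Newton's model, the sequence (X_n) is conditionally identically distributed (c.i.d.): for every n ≥ 0, every k ≥ 1 and every bounded measurable h : 𝕏 → ℝ, E[h(X_{n+k}) | F_n] = E[h(X_{n+1}) | F_n] P-almost surely, where (F_n) is the natural filtration of (X_n). -/
open MeasureTheory ProbabilityTheory Filter Set
open scoped ENNReal NNReal Topology

noncomputable section

lemma integrable_of_bound {Ω : Type*} {m0 : MeasurableSpace Ω} (P : Measure Ω)
    [IsFiniteMeasure P] {f : Ω → ℝ} (hf : AEStronglyMeasurable f P) (C : ℝ)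
    (hC : ∀ ω, |f ω| ≤ C) : Integrable f P :=
  ⟨hf, HasFiniteIntegral.of_bounded (C := C) (Eventually.of_forall hC)⟩


lemma my_integral_indicator {Ω : Type*} {m0 : MeasurableSpace Ω} (P : Measure Ω)
    {s : Set Ω} (hs : MeasurableSet s) (f : Ω → ℝ) :
    ∫ ω in s, f ω ∂P = ∫ ω, s.indicator f ω ∂P :=
  (integral_indicator hs).symm

lemma my_setIntegral_indicator_one {Ω : Type*} {m0 : MeasurableSpace Ω} (P : Measure Ω)
    {B s : Set Ω} (hB : MeasurableSet B) (hs : MeasurableSet s) :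
    ∫ ω in s, B.indicator (fun _ => (1:ℝ)) ω ∂P = (P (s ∩ B)).toReal := by
  rw [my_integral_indicator P hs]
  have : s.indicator (B.indicator fun _ => (1:ℝ)) = (s ∩ B).indicator (fun _ => (1:ℝ)) := by
    ext ω
    by_cases h1 : ω ∈ s <;> by_cases h2 : ω ∈ B <;>
      simp [Set.indicator_apply, h1, h2, Set.mem_inter_iff]
  rw [this, integral_indicator_const _ (hs.inter hB), smul_eq_mul, mul_one]; rfl

lemma my_setIntegral_congr_ae {Ω : Type*} {m0 : MeasurableSpace Ω} (P : Measure Ω)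
    {s : Set Ω} {f g : Ω → ℝ} (h : f =ᵐ[P] g) :
    ∫ ω in s, f ω ∂P = ∫ ω in s, g ω ∂P :=
  integral_congr_ae (ae_restrict_of_ae h)


lemma my_integral_map {Ω S' : Type*} {m0 : MeasurableSpace Ω} {mS' : MeasurableSpace S'}
    (P : Measure Ω) {φ : Ω → S'} (hφ : Measurable φ) {g : S' → ℝ}
    (hg : AEStronglyMeasurable g (P.map φ)) :
    ∫ y, g y ∂(P.map φ) = ∫ x, g (φ x) ∂P :=
  integral_map hφ.aemeasurable hg

/-- If a Markov kernel `κ`, `𝔪`-measurable, is a version of the conditional distribution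
of `Y` given `𝔪` (tested on indicator functions), then the conditional expectation of any
bounded jointly measurable `H (ω, Y ω)` is the kernel integral. -/
lemma condexp_eq_kernel_integral
    {Ω S : Type*} {m0 : MeasurableSpace Ω} [𝔪 : MeasurableSpace Ω] [mS : MeasurableSpace S]
    (P : @Measure Ω m0) [IsProbabilityMeasure P]
    (h𝔪 : 𝔪 ≤ m0)
    {Y : Ω → S} (hY : @Measurable Ω S m0 mS Y)
    (κ : Kernel Ω S) [IsMarkovKernel κ]
    (hκ : ∀ A : Set S, MeasurableSet A →
      (fun ω => (κ ω A).toReal) =ᵐ[P]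
        P[fun ω => A.indicator (fun _ => (1:ℝ)) (Y ω) | 𝔪])
    {H : Ω × S → ℝ} (hH : Measurable H)
    {C : ℝ} (hC : ∀ p, |H p| ≤ C) :
    P[fun ω => H (ω, Y ω) | 𝔪] =ᵐ[P] fun ω => ∫ s, H (ω, s) ∂(κ ω) := by
  haveI : IsProbabilityMeasure (P.trim h𝔪) :=
    ⟨by rw [trim_measurableSet_eq h𝔪 MeasurableSet.univ]; exact measure_univ⟩
  have hmap : @Measurable Ω (Ω × S) m0 _ (fun ω => (ω, Y ω)) :=
    (measurable_id'' h𝔪).prodMk hY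
  -- the joint law equals the compProd of the trimmed measure with the kernel
  have hρ : @Measure.map Ω (Ω × S) m0 _ (fun ω => (ω, Y ω)) P = (P.trim h𝔪) ⊗ₘ κ := by
    haveI : IsProbabilityMeasure (@Measure.map Ω (Ω × S) m0 _ (fun ω => (ω, Y ω)) P) :=
      Measure.isProbabilityMeasure_map hmap.aemeasurable
    refine ext_of_generate_finite _ generateFrom_prod.symm isPiSystem_prod ?_ ?_
    · rintro _ ⟨s, hs, A, hA, rfl⟩
      simp only [Set.mem_setOf_eq] at hs hA
      have hsA : MeasurableSet (s ×ˢ A) := hs.prod hA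
      have hpre : (fun ω => (ω, Y ω)) ⁻¹' (s ×ˢ A) = s ∩ Y ⁻¹' A := by
        ext ω; simp [Set.mem_prod]
      rw [Measure.map_apply hmap hsA, hpre, Measure.compProd_apply_prod hs hA]
      -- move the lintegral from the trimmed measure to `P`
      have hκA : @Measurable Ω ℝ≥0∞ 𝔪 _ (fun ω => κ ω A) := κ.measurable_coe hA
      have htrim : ∫⁻ ω in s, κ ω A ∂(P.trim h𝔪) = ∫⁻ ω in s, κ ω A ∂P := by
        rw [← lintegral_indicator hs, ← lintegral_indicator (h𝔪 _ hs),
          lintegral_trim h𝔪 (hκA.indicator hs)]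
      rw [htrim]
      -- compare with the conditional expectation via `hκ`
      have hind : Integrable (fun ω => A.indicator (fun _ => (1:ℝ)) (Y ω)) P := by
        refine integrable_of_bound P ?_ 1 ?_
        · exact ((measurable_one.indicator hA).comp hY).aestronglyMeasurable
        · intro ω; by_cases h : Y ω ∈ A <;> simp [Set.indicator_apply, h]
      have h1 : ∫ ω in s, (κ ω A).toReal ∂P
          = ∫ ω in s, A.indicator (fun _ => (1:ℝ)) (Y ω) ∂P := by
        rw [my_setIntegral_congr_ae P (hκ A hA)]
        exact setIntegral_condExp h𝔪 hind hs
      have h2 : ∫ ω in s, A.indicator (fun _ => (1:ℝ)) (Y ω) ∂P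
          = (P (s ∩ Y ⁻¹' A)).toReal := by
        have : (fun ω => A.indicator (fun _ => (1:ℝ)) (Y ω))
            = (Y ⁻¹' A).indicator (fun _ => (1:ℝ)) := by
          ext ω; by_cases h : Y ω ∈ A <;> simp [Set.indicator_apply, h]
        rw [this]
        exact my_setIntegral_indicator_one P (hY hA) (h𝔪 _ hs)
      have h3 : ∫ ω in s, (κ ω A).toReal ∂P = (∫⁻ ω in s, κ ω A ∂P).toReal := by
        refine integral_toReal ((hκA.mono h𝔪 le_rfl).aemeasurable) ?_
        exact Eventually.of_forall fun ω => lt_of_le_of_lt prob_le_one ENNReal.one_lt_top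
      have hfin1 : ∫⁻ ω in s, κ ω A ∂P ≠ ∞ := by
        refine ne_of_lt (lt_of_le_of_lt ?_ (measure_lt_top P s))
        calc ∫⁻ ω in s, κ ω A ∂P ≤ ∫⁻ _ in s, 1 ∂P :=
              lintegral_mono fun ω => prob_le_one
          _ = P s := by simp
      have hfin2 : P (s ∩ Y ⁻¹' A) ≠ ∞ := measure_ne_top _ _
      have heq : (P (s ∩ Y ⁻¹' A)).toReal = (∫⁻ ω in s, κ ω A ∂P).toReal :=
        (h2.symm.trans h1.symm).trans h3
      exact (ENNReal.toReal_eq_toReal_iff' hfin2 hfin1).mp heq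
    · simp [Measure.map_apply hmap MeasurableSet.univ]
  -- now conclude via the characterization of the conditional expectation
  haveI : IsProbabilityMeasure ((P.trim h𝔪) ⊗ₘ κ) := by
    constructor; rw [Measure.compProd_apply_univ]; exact measure_univ
  set g : Ω → ℝ := fun ω => ∫ x, H (ω, x) ∂(κ ω) with hg_def
  have hgsm : @StronglyMeasurable Ω ℝ _ 𝔪 g :=
    StronglyMeasurable.integral_kernel_prod_right' hH.stronglyMeasurable
  have hgb : ∀ ω, |g ω| ≤ C := by
    intro ω
    rw [← Real.norm_eq_abs]
    calc ‖∫ x, H (ω, x) ∂(κ ω)‖ ≤ C * ((κ ω) univ).toReal :=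
          norm_integral_le_of_norm_le_const
            (Eventually.of_forall fun x => by rw [Real.norm_eq_abs]; exact hC _)
      _ = C := by simp
  have hf_meas : @Measurable Ω ℝ m0 _ (fun ω => H (ω, Y ω)) := hH.comp hmap
  have hf_int : Integrable (fun ω => H (ω, Y ω)) P :=
    integrable_of_bound P hf_meas.aestronglyMeasurable C (fun ω => hC _)
  have hg_eq : ∀ s : Set Ω, MeasurableSet[𝔪] s → P s < ∞ →
      ∫ ω in s, g ω ∂P = ∫ ω in s, H (ω, Y ω) ∂P := by
    intro s hs _
    classical
    set Hs : Ω × S → ℝ := (s ×ˢ (univ : Set S)).indicator H with hHs_def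
    have hHs_meas : Measurable Hs := hH.indicator (hs.prod MeasurableSet.univ)
    have hHs_bound : ∀ p, |Hs p| ≤ max C 0 := by
      intro p
      rw [hHs_def]
      by_cases hp : p ∈ s ×ˢ (univ : Set S)
      · rw [Set.indicator_of_mem hp]; exact le_max_of_le_left (hC p)
      · rw [Set.indicator_of_notMem hp]; simp
    have hHs_int : Integrable Hs ((P.trim h𝔪) ⊗ₘ κ) :=
      integrable_of_bound _ hHs_meas.aestronglyMeasurable _ hHs_bound
    have step1 : ∫ ω in s, H (ω, Y ω) ∂P = ∫ ω, Hs (ω, Y ω) ∂P := by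
      rw [my_integral_indicator P (h𝔪 _ hs)]
      refine integral_congr_ae (Eventually.of_forall fun ω => ?_)
      by_cases hω : ω ∈ s <;>
        simp [hHs_def, Set.indicator_apply, hω]
    have step2 : ∫ ω, Hs (ω, Y ω) ∂P
        = ∫ p, Hs p ∂(@Measure.map Ω (Ω × S) m0 _ (fun ω => (ω, Y ω)) P) :=
      (my_integral_map P hmap hHs_meas.aestronglyMeasurable).symm
    have step3 : ∫ p, Hs p ∂(@Measure.map Ω (Ω × S) m0 _ (fun ω => (ω, Y ω)) P)
        = ∫ ω, ∫ x, Hs (ω, x) ∂(κ ω) ∂(P.trim h𝔪) := by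
      rw [hρ]; exact Measure.integral_compProd hHs_int
    have hin : ∀ ω, ∫ x, Hs (ω, x) ∂(κ ω) = s.indicator g ω := by
      intro ω
      by_cases hω : ω ∈ s
      · rw [Set.indicator_of_mem hω, hg_def]
        refine integral_congr_ae (Eventually.of_forall fun x => ?_)
        simp [hHs_def, Set.indicator_apply, hω]
      · rw [Set.indicator_of_notMem hω]
        have hz : ∀ x : S, Hs (ω, x) = 0 := fun x => by
          simp [hHs_def, Set.indicator_apply, hω]
        simp only [hz, integral_zero]
    have step4 : ∫ ω, ∫ x, Hs (ω, x) ∂(κ ω) ∂(P.trim h𝔪) = ∫ ω, s.indicator g ω ∂P := by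
      rw [integral_congr_ae (Eventually.of_forall hin)]
      exact (integral_trim h𝔪 (hgsm.indicator hs)).symm
    rw [step1, step2, step3, step4, my_integral_indicator P (h𝔪 _ hs)]
  refine (ae_eq_condExp_of_forall_setIntegral_eq h𝔪 hf_int ?_ hg_eq
    hgsm.aestronglyMeasurable).symm
  intro s hs _
  exact integrable_of_bound (P.restrict s)
    ((hgsm.mono h𝔪).aestronglyMeasurable) C hgb

/-- Package a measure-valued map as a kernel (in a clean instance context). -/
def mkKernel {Ω' Θ' : Type*} [m1 : MeasurableSpace Ω'] [mΘ' : MeasurableSpace Θ']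
    (G : Ω' → Measure Θ')
    (hG : ∀ A : Set Θ', MeasurableSet A → Measurable fun ω => G ω A) : Kernel Ω' Θ' :=
  ⟨G, Measure.measurable_of_measurable_coe _ hG⟩

@[simp] lemma mkKernel_apply {Ω' Θ' : Type*} [m1 : MeasurableSpace Ω'] [mΘ' : MeasurableSpace Θ']
    (G : Ω' → Measure Θ') (hG) (ω : Ω') : mkKernel G hG ω = G ω := rfl

lemma lintegral_kernel_meas {Ω' Θ' : Type*} [m1 : MeasurableSpace Ω'] [mΘ' : MeasurableSpace Θ']
    {G : Ω' → Measure Θ'} (hG : ∀ A : Set Θ', MeasurableSet A → Measurable fun ω => G ω A)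
    (hmass : ∀ ω, G ω Set.univ ≤ 1)
    {g : Ω' × Θ' → ℝ≥0∞} (hg : Measurable g) :
    Measurable fun ω => ∫⁻ t, g (ω, t) ∂(G ω) := by
  haveI : IsFiniteKernel (mkKernel G hG) :=
    ⟨⟨1, ENNReal.one_lt_top, fun ω => by simpa using hmass ω⟩⟩
  have := Measurable.lintegral_kernel_prod_right
    (κ := mkKernel G hG) (f := fun ω t => g (ω, t)) hg
  simpa using this

lemma integral_kernel_sm {Ω' Θ' : Type*} [m1 : MeasurableSpace Ω'] [mΘ' : MeasurableSpace Θ']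
    {G : Ω' → Measure Θ'} (hG : ∀ A : Set Θ', MeasurableSet A → Measurable fun ω => G ω A)
    (hmass : ∀ ω, G ω Set.univ ≤ 1)
    {g : Ω' × Θ' → ℝ} (hg : StronglyMeasurable g) :
    StronglyMeasurable fun ω => ∫ t, g (ω, t) ∂(G ω) := by
  haveI : IsFiniteKernel (mkKernel G hG) :=
    ⟨⟨1, ENNReal.one_lt_top, fun ω => by simpa using hmass ω⟩⟩
  have := StronglyMeasurable.integral_kernel_prod_right' (κ := mkKernel G hG) hg
  simpa using this


namespace NewtonModel

variable {Ω 𝕏 Θ : Type*} [mΩ : MeasurableSpace Ω] [m𝕏 : MeasurableSpace 𝕏]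
  [mΘ : MeasurableSpace Θ] (M : NewtonModel Ω 𝕏 Θ)

lemma hF_le (n : ℕ) : M.F n ≤ mΩ := by
  rw [M.F_def]
  exact iSup₂_le fun i _ => (M.meas_X i).comap_le

lemma hF_mono {n m : ℕ} (hnm : n ≤ m) : M.F n ≤ M.F m := by
  rw [M.F_def n, M.F_def m]
  exact iSup₂_le fun i hi =>
    le_iSup₂ (f := fun i (_ : i ∈ Set.Icc 1 m) => MeasurableSpace.comap (M.X i) m𝕏)
      i ⟨hi.1, hi.2.trans hnm⟩

lemma hX_measF {i n : ℕ} (h1 : 1 ≤ i) (h2 : i ≤ n) : Measurable[M.F n] (M.X i) := by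
  rw [measurable_iff_comap_le, M.F_def n]
  exact le_iSup₂ (f := fun i (_ : i ∈ Set.Icc 1 n) => MeasurableSpace.comap (M.X i) m𝕏)
    i ⟨h1, h2⟩

lemma G_mass : ∀ n ω, M.G n ω Set.univ ≤ 1 := by
  intro n
  induction n with
  | zero =>
    intro ω
    haveI := M.probG0
    rw [M.G_zero, measure_univ]
  | succ n ih =>
    intro ω
    rw [M.G_rec]
    set c := ∫⁻ t, M.f (M.X (n+1) ω) t ∂(M.G n ω) with hc
    have hwd : (M.G n ω).withDensity (M.f (M.X (n+1) ω)) Set.univ = c := by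
      rw [withDensity_apply _ MeasurableSet.univ, Measure.restrict_univ]
    have h2 : (c⁻¹ • (M.G n ω).withDensity (M.f (M.X (n+1) ω))) Set.univ ≤ 1 := by
      rw [Measure.smul_apply, smul_eq_mul, hwd]
      rcases eq_or_ne c 0 with h | h
      · simp [h]
      rcases eq_or_ne c ∞ with h' | h'
      · simp [h']
      · rw [ENNReal.inv_mul_cancel h h']
    have hα := M.α_mem (n+1)
    calc (ENNReal.ofReal (1 - M.α (n+1)) • M.G n ω +
          ENNReal.ofReal (M.α (n+1)) •
            (c⁻¹ • (M.G n ω).withDensity (M.f (M.X (n+1) ω)))) Set.univ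
        = ENNReal.ofReal (1 - M.α (n+1)) * M.G n ω Set.univ +
          ENNReal.ofReal (M.α (n+1)) *
            ((c⁻¹ • (M.G n ω).withDensity (M.f (M.X (n+1) ω))) Set.univ) := by
          simp [Measure.add_apply, Measure.smul_apply, smul_eq_mul]
      _ ≤ ENNReal.ofReal (1 - M.α (n+1)) * 1 + ENNReal.ofReal (M.α (n+1)) * 1 :=
          add_le_add (mul_le_mul_right (ih ω) _) (mul_le_mul_right h2 _)
      _ = 1 := by
          rw [mul_one, mul_one, ← ENNReal.ofReal_add (by linarith [hα.2]) (le_of_lt hα.1)]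
          norm_num

lemma hG_Fmeas : ∀ n, ∀ A : Set Θ, MeasurableSet A →
    Measurable[M.F n] (fun ω => M.G n ω A) := by
  intro n
  induction n with
  | zero =>
    intro A _
    simp only [M.G_zero]
    exact measurable_const
  | succ n ih =>
    intro A hA
    have ih' : ∀ A : Set Θ, MeasurableSet A → Measurable[M.F (n+1)] (fun ω => M.G n ω A) :=
      fun A hA => (ih A hA).mono (M.hF_mono n.le_succ) le_rfl
    have hXm : Measurable[M.F (n+1)] (M.X (n+1)) :=
      M.hX_measF (Nat.succ_le_succ (Nat.zero_le n)) le_rfl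
    have hunc : Measurable[(M.F (n+1)).prod mΘ]
        (fun p : Ω × Θ => M.f (M.X (n+1) p.1) p.2) :=
      M.meas_f.comp ((hXm.comp measurable_fst).prodMk measurable_snd)
    have hc : Measurable[M.F (n+1)]
        (fun ω => ∫⁻ t, M.f (M.X (n+1) ω) t ∂(M.G n ω)) :=
      lintegral_kernel_meas (m1 := M.F (n+1)) ih' (M.G_mass n) hunc
    have hcA : Measurable[M.F (n+1)]
        (fun ω => ∫⁻ t in A, M.f (M.X (n+1) ω) t ∂(M.G n ω)) := by
      have hind : Measurable[(M.F (n+1)).prod mΘ]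
          (fun p : Ω × Θ => A.indicator (fun t => M.f (M.X (n+1) p.1) t) p.2) := by
        have : (fun p : Ω × Θ => A.indicator (fun t => M.f (M.X (n+1) p.1) t) p.2)
            = (Prod.snd ⁻¹' A).indicator (fun p : Ω × Θ => M.f (M.X (n+1) p.1) p.2) := by
          funext p
          by_cases hp : p.2 ∈ A <;> simp [Set.indicator_apply, hp]
        rw [this]
        exact hunc.indicator (measurable_snd hA)
      simp_rw [← lintegral_indicator hA]
      exact lintegral_kernel_meas (m1 := M.F (n+1)) ih' (M.G_mass n) hind
    have heq : (fun ω => M.G (n+1) ω A)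
        = fun ω => ENNReal.ofReal (1 - M.α (n+1)) * M.G n ω A +
            ENNReal.ofReal (M.α (n+1)) *
              ((∫⁻ t, M.f (M.X (n+1) ω) t ∂(M.G n ω))⁻¹ *
                ∫⁻ t in A, M.f (M.X (n+1) ω) t ∂(M.G n ω)) := by
      funext ω
      rw [M.G_rec]
      simp [Measure.add_apply, Measure.smul_apply, smul_eq_mul,
        withDensity_apply _ hA]
    rw [heq]
    exact (((ih A hA).mono (M.hF_mono n.le_succ) le_rfl).const_mul _).add
      ((hc.inv.mul hcA).const_mul _)

/-- Markov-kernel version of `G n`, measurable w.r.t. `F n`. -/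
def kG (n : ℕ) : Kernel[M.F n] Ω Θ :=
  mkKernel (m1 := M.F n) (fun ω => if M.G n ω Set.univ = 1 then M.G n ω else M.G0)
    (by
      intro A hA
      have hset : MeasurableSet[M.F n] {ω | M.G n ω Set.univ = 1} := by
        have := (M.hG_Fmeas n Set.univ MeasurableSet.univ) (measurableSet_singleton (1 : ℝ≥0∞))
        simpa [Set.preimage, Set.mem_singleton_iff] using this
      simp_rw [apply_ite (fun ν : Measure Θ => ν A)]
      exact Measurable.ite hset (M.hG_Fmeas n A hA) measurable_const)

lemma kG_apply (n : ℕ) (ω : Ω) :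
    M.kG n ω = if M.G n ω Set.univ = 1 then M.G n ω else M.G0 := rfl

instance (n : ℕ) : IsMarkovKernel (M.kG n) := by
  constructor
  intro ω
  rw [kG_apply]
  split_ifs with h
  · exact ⟨h⟩
  · exact M.probG0

lemma kG_ae (n : ℕ) : ∀ᵐ ω ∂M.P, M.kG n ω = M.G n ω := by
  haveI := M.probP
  have h2 := M.cond_th n Set.univ MeasurableSet.univ
  have h3 : (fun ω => Set.univ.indicator (fun _ => (1:ℝ)) (M.th (n+1) ω))
      = fun _ : Ω => (1:ℝ) := by funext ω; simp
  rw [h3, condExp_const (M.hF_le n)] at h2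
  filter_upwards [h2] with ω hω
  have h4 : M.G n ω Set.univ = 1 := (ENNReal.toReal_eq_one_iff _).mp hω
  rw [kG_apply, if_pos h4]

/-- The kernel `t ↦ f(·|t) dμ`. -/
def kf : Kernel Θ 𝕏 :=
  mkKernel (fun t => M.μ.withDensity (fun x => M.f x t))
    (by
      intro B hB
      haveI := M.sfin
      simp_rw [withDensity_apply _ hB]
      exact Measurable.lintegral_prod_right' (ν := M.μ.restrict B)
        (f := fun p : Θ × 𝕏 => M.f p.2 p.1)
        (M.meas_f.comp (measurable_snd.prodMk measurable_fst)))

lemma kf_apply (t : Θ) : M.kf t = M.μ.withDensity (fun x => M.f x t) := rfl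

lemma kf_apply' (t : Θ) {B : Set 𝕏} (hB : MeasurableSet B) :
    M.kf t B = ∫⁻ x in B, M.f x t ∂M.μ := by
  rw [kf_apply, withDensity_apply _ hB]

instance : IsMarkovKernel M.kf := by
  constructor
  intro t
  constructor
  rw [kf_apply, withDensity_apply _ MeasurableSet.univ, Measure.restrict_univ]
  exact M.f_dens t

/-- The predictive kernel of `X (n+1)` given `F n`. -/
def kP (n : ℕ) : Kernel[M.F n] Ω 𝕏 := M.kf ∘ₖ M.kG n

instance (n : ℕ) : IsMarkovKernel (M.kP n) := by unfold kP; infer_instance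

lemma kP_apply (n : ℕ) (ω : Ω) : M.kP n ω = (M.kG n ω).bind M.kf := Kernel.comp_apply _ _ _

lemma kP_eq_withDensity (n : ℕ) (ω : Ω) :
    M.kP n ω = M.μ.withDensity (fun x => ∫⁻ t, M.f x t ∂(M.kG n ω)) := by
  haveI := M.sfin
  ext B hB
  rw [kP_apply, Measure.bind_apply hB (Kernel.measurable _).aemeasurable, withDensity_apply _ hB]
  have h1 : ∀ t, M.kf t B = ∫⁻ x, B.indicator (fun x => M.f x t) x ∂M.μ := by
    intro t
    rw [kf_apply' _ _ hB, lintegral_indicator hB]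
  simp_rw [h1]
  rw [lintegral_lintegral_swap]
  · rw [← lintegral_indicator hB]
    congr 1
    funext x
    by_cases hx : x ∈ B
    · simp only [Set.indicator_of_mem hx]
    · simp [Set.indicator_of_notMem hx]
  · have : Measurable (Function.uncurry fun t x => B.indicator (fun x => M.f x t) x) := by
      have hbase : Measurable (fun p : Θ × 𝕏 => M.f p.2 p.1) :=
        M.meas_f.comp (measurable_snd.prodMk measurable_fst)
      have : (Function.uncurry fun t x => B.indicator (fun x => M.f x t) x)
          = (Prod.snd ⁻¹' B).indicator (fun p : Θ × 𝕏 => M.f p.2 p.1) := by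
        funext p
        by_cases hp : p.2 ∈ B <;> simp [Function.uncurry, Set.indicator_apply, hp]
      rw [this]
      exact hbase.indicator (measurable_snd hB)
    exact this.aemeasurable



/-- The σ-algebra generated by all the θ's together with `F n`. -/
@[reducible] def thSup (n : ℕ) : MeasurableSpace Ω :=
  (⨆ k, MeasurableSpace.comap (M.th k) mΘ) ⊔ M.F n

lemma thSup_le (n : ℕ) : M.thSup n ≤ mΩ :=
  sup_le (iSup_le fun k => (M.meas_th k).comap_le) (M.hF_le n)

lemma F_le_thSup (n : ℕ) : M.F n ≤ M.thSup n := le_sup_right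

lemma th_meas_thSup (n : ℕ) : Measurable[M.thSup n] (M.th (n+1)) := by
  rw [measurable_iff_comap_le]
  exact le_trans (le_iSup (fun k => MeasurableSpace.comap (M.th k) mΘ) (n+1)) le_sup_left

/-- Conditional expectation given `F n` of a function of `(ω, θ_{n+1})`. -/
lemma condexp_th (n : ℕ) {H : Ω × Θ → ℝ}
    (hH : @Measurable (Ω × Θ) ℝ ((M.F n).prod mΘ) _ H) {C : ℝ} (hC : ∀ p, |H p| ≤ C) :
    M.P[fun ω => H (ω, M.th (n+1) ω)|M.F n] =ᵐ[M.P] fun ω => ∫ t, H (ω, t) ∂(M.kG n ω) := by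
  haveI := M.probP
  refine @condexp_eq_kernel_integral Ω Θ mΩ (M.F n) mΘ M.P _ (M.hF_le n) _
    (M.meas_th (n+1)) (M.kG n) _ ?_ H hH C hC
  intro A hA
  refine EventuallyEq.trans ?_ (M.cond_th n A hA)
  filter_upwards [M.kG_ae n] with ω hω
  rw [hω]

/-- Conditional distribution of `X (n+1)` given the θ's and `F n`. -/
lemma condexp_X (n : ℕ) {h' : 𝕏 → ℝ} (hh' : Measurable h') {C : ℝ}
    (hC : ∀ x, |h' x| ≤ C) :
    M.P[fun ω => h' (M.X (n+1) ω)| M.thSup n]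
      =ᵐ[M.P] fun ω => ∫ x, h' x ∂(M.kf (M.th (n+1) ω)) := by
  haveI := M.probP
  have h𝔪' : M.thSup n ≤ mΩ := M.thSup_le n
  have hth' : Measurable[M.thSup n] (M.th (n+1)) := M.th_meas_thSup n
  have key := @condexp_eq_kernel_integral Ω 𝕏 mΩ (M.thSup n) m𝕏 M.P _ h𝔪' _
    (M.meas_X (n+1)) (Kernel.comap M.kf (M.th (n+1)) hth') _ ?_
    (fun p => h' p.2) (hh'.comp measurable_snd) C (fun p => hC p.2)
  · refine key.trans (Eventually.of_forall fun ω => ?_)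
    simp [Kernel.comap_apply]
  · intro B hB
    have : ∀ ω, Kernel.comap M.kf (M.th (n+1)) hth' ω B
        = ∫⁻ x in B, M.f x (M.th (n+1) ω) ∂M.μ := by
      intro ω
      rw [Kernel.comap_apply, kf_apply' _ _ hB]
    simp_rw [this]
    exact M.cond_X n B hB

/-- The predictive kernel is a version of the conditional distribution of `X (n+1)`
given `F n`. -/
lemma pred_ind (n : ℕ) {B : Set 𝕏} (hB : MeasurableSet B) :
    (fun ω => (M.kP n ω B).toReal) =ᵐ[M.P]
      M.P[fun ω => B.indicator (fun _ => (1:ℝ)) (M.X (n+1) ω)|M.F n] := by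
  haveI := M.probP
  have h𝔪' : M.thSup n ≤ mΩ := M.thSup_le n
  haveI : IsProbabilityMeasure (M.P.trim h𝔪') :=
    ⟨by rw [trim_measurableSet_eq h𝔪' MeasurableSet.univ]; exact measure_univ⟩
  have hFle : M.F n ≤ M.thSup n := M.F_le_thSup n
  have hind_meas : Measurable (fun x => B.indicator (fun _ => (1:ℝ)) x) :=
    measurable_const.indicator hB
  have hind_bd : ∀ x : 𝕏, |B.indicator (fun _ => (1:ℝ)) x| ≤ 1 := by
    intro x; by_cases hx : x ∈ B <;> simp [Set.indicator_apply, hx]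
  have tower : M.P[fun ω => B.indicator (fun _ => (1:ℝ)) (M.X (n+1) ω)|M.F n]
      =ᵐ[M.P] M.P[M.P[fun ω => B.indicator (fun _ => (1:ℝ)) (M.X (n+1) ω)|M.thSup n]|M.F n] :=
    (condExp_condExp_of_le hFle h𝔪').symm
  have inner := M.condexp_X n hind_meas hind_bd
  have inner' : (fun ω => ∫ x, B.indicator (fun _ => (1:ℝ)) x ∂(M.kf (M.th (n+1) ω)))
      = fun ω => ((M.kf (M.th (n+1) ω)) B).toReal := by
    funext ω
    rw [integral_indicator_const _ hB, smul_eq_mul, mul_one]; rfl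
  have houter := M.condexp_th n
    (H := fun p : Ω × Θ => ((M.kf p.2) B).toReal)
    (Measurable.ennreal_toReal ((Kernel.measurable_coe M.kf hB).comp measurable_snd))
    (C := 1)
    (fun p => by
      rw [abs_of_nonneg ENNReal.toReal_nonneg]
      exact ENNReal.toReal_le_of_le_ofReal zero_le_one (by simpa using prob_le_one))
  have hfinal : (fun ω => ∫ t, ((M.kf t) B).toReal ∂(M.kG n ω))
      = fun ω => (M.kP n ω B).toReal := by
    funext ω
    rw [kP_apply, Measure.bind_apply hB (Kernel.measurable _).aemeasurable]
    rw [integral_toReal ((M.kf.measurable_coe hB).aemeasurable)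
      (Eventually.of_forall fun t => measure_lt_top _ _)]
  refine EventuallyEq.symm (tower.trans ?_)
  have step : M.P[M.P[fun ω => B.indicator (fun _ => (1:ℝ)) (M.X (n+1) ω)|M.thSup n]|M.F n]
      =ᵐ[M.P] M.P[fun ω => ((M.kf (M.th (n+1) ω)) B).toReal|M.F n] :=
    condExp_congr_ae (inner.trans (Eventually.of_forall fun ω => by rw [inner']))
  refine step.trans ?_
  refine houter.trans ?_
  rw [hfinal]

/-- Conditional expectation given `F n` of a bounded function of `(ω, X (n+1))`. -/
lemma condexp_pred (n : ℕ) {H : Ω × 𝕏 → ℝ}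
    (hH : @Measurable (Ω × 𝕏) ℝ ((M.F n).prod m𝕏) _ H) {C : ℝ} (hC : ∀ p, |H p| ≤ C) :
    M.P[fun ω => H (ω, M.X (n+1) ω)|M.F n] =ᵐ[M.P] fun ω => ∫ x, H (ω, x) ∂(M.kP n ω) := by
  haveI := M.probP
  exact @condexp_eq_kernel_integral Ω 𝕏 mΩ (M.F n) m𝕏 M.P _ (M.hF_le n) _
    (M.meas_X (n+1)) (M.kP n) _ (fun B hB => M.pred_ind n hB) H hH C hC


lemma inv_mul_le_one' (a : ℝ≥0∞) : a⁻¹ * a ≤ 1 := by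
  rcases eq_or_ne a 0 with h | h
  · simp [h]
  rcases eq_or_ne a ∞ with h' | h'
  · simp [h']
  · rw [ENNReal.inv_mul_cancel h h']

variable (h : 𝕏 → ℝ)

/-- the expected value of `h` under `f(⋅|t) dμ`, in `ℝ≥0∞` (for `0 ≤ h`) -/
def q (t : Θ) : ℝ≥0∞ := ∫⁻ x, ENNReal.ofReal (h x) ∂(M.kf t)

/-- the predictive expectation of `h (X (n+1))` given `F n` -/
def psi (n : ℕ) (ω : Ω) : ℝ := (∫⁻ t, M.q h t ∂(M.kG n ω)).toReal

variable {h} {C : ℝ} (hme : Measurable h) (hC : ∀ x, h x ≤ C)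

include hme in
lemma q_meas : Measurable (M.q h) := by
  have := Measurable.lintegral_kernel_prod_right (κ := M.kf)
    (f := fun t x => ENNReal.ofReal (h x)) (hme.ennreal_ofReal.comp measurable_snd)
  exact this

include hC in
lemma q_le (t : Θ) : M.q h t ≤ ENNReal.ofReal C := by
  haveI : IsProbabilityMeasure (M.kf t) := IsMarkovKernel.isProbabilityMeasure t
  calc M.q h t ≤ ∫⁻ _, ENNReal.ofReal C ∂(M.kf t) :=
        lintegral_mono fun x => ENNReal.ofReal_le_ofReal (hC x)
    _ = ENNReal.ofReal C := by rw [lintegral_const, measure_univ, mul_one]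

include hme in
lemma psi_meas (n : ℕ) : Measurable[M.F n] (M.psi h n) := by
  refine Measurable.ennreal_toReal ?_
  exact @lintegral_kernel_meas Ω Θ (M.F n) mΘ (fun ω => M.kG n ω)
    (fun A hA => (M.kG n).measurable_coe hA)
    (fun ω => le_of_eq measure_univ)
    (fun p => M.q h p.2) ((M.q_meas hme).comp measurable_snd)

include hC in
lemma lintegral_q_le (n : ℕ) (ω : Ω) : ∫⁻ t, M.q h t ∂(M.kG n ω) ≤ ENNReal.ofReal C := by
  haveI : IsProbabilityMeasure (M.kG n ω) := IsMarkovKernel.isProbabilityMeasure ω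
  calc ∫⁻ t, M.q h t ∂(M.kG n ω) ≤ ∫⁻ _, ENNReal.ofReal C ∂(M.kG n ω) :=
        lintegral_mono fun t => M.q_le hC t
    _ = ENNReal.ofReal C := by rw [lintegral_const, measure_univ, mul_one]

lemma psi_nonneg (n : ℕ) (ω : Ω) : 0 ≤ M.psi h n ω := ENNReal.toReal_nonneg

include hC in
lemma psi_le (hC0 : 0 ≤ C) (n : ℕ) (ω : Ω) : M.psi h n ω ≤ C :=
  ENNReal.toReal_le_of_le_ofReal hC0 (M.lintegral_q_le hC n ω)

include hme hC in
/-- E1: the conditional expectation of `h (X (n+1))` given `F n` is `psi h n`. -/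
lemma E1 (h0 : ∀ x, 0 ≤ h x) (n : ℕ) :
    M.P[fun ω => h (M.X (n+1) ω)|M.F n] =ᵐ[M.P] M.psi h n := by
  haveI := M.probP
  have h𝔪' : M.thSup n ≤ mΩ := M.thSup_le n
  haveI : IsProbabilityMeasure (M.P.trim h𝔪') :=
    ⟨by rw [trim_measurableSet_eq h𝔪' MeasurableSet.univ]; exact measure_univ⟩
  have habs : ∀ x, |h x| ≤ C := fun x => abs_le.mpr ⟨by linarith [h0 x, hC x], hC x⟩
  have hC0 : 0 ≤ C := by
    rcases isEmpty_or_nonempty 𝕏 with hX | hX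
    · by_contra hc
      push_neg at hc
      have hE : M.P Set.univ = 1 := measure_univ
      rcases isEmpty_or_nonempty Ω with hO | hO
      · rw [Set.univ_eq_empty_iff.mpr hO, measure_empty] at hE
        exact zero_ne_one hE
      · exact (IsEmpty.false (M.X 0 (Classical.arbitrary Ω))).elim
    · obtain ⟨x⟩ := hX
      exact le_trans (h0 x) (hC x)
  have tower : M.P[fun ω => h (M.X (n+1) ω)|M.F n]
      =ᵐ[M.P] M.P[M.P[fun ω => h (M.X (n+1) ω)|M.thSup n]|M.F n] :=
    (condExp_condExp_of_le (M.F_le_thSup n) h𝔪').symm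
  have inner := M.condexp_X n hme habs
  have hQsm : StronglyMeasurable (fun t => ∫ x, h x ∂(M.kf t)) :=
    integral_kernel_sm (fun B hB => M.kf.measurable_coe hB)
      (fun t => le_of_eq measure_univ)
      ((hme.comp measurable_snd).stronglyMeasurable)
  have hQbd : ∀ t, |∫ x, h x ∂(M.kf t)| ≤ C := by
    intro t
    haveI : IsProbabilityMeasure (M.kf t) := IsMarkovKernel.isProbabilityMeasure t
    rw [← Real.norm_eq_abs]
    calc ‖∫ x, h x ∂(M.kf t)‖ ≤ C * ((M.kf t) Set.univ).toReal :=
          norm_integral_le_of_norm_le_const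
            (Eventually.of_forall fun x => by rw [Real.norm_eq_abs]; exact habs x)
      _ = C := by simp
  have houter := M.condexp_th n (H := fun p : Ω × Θ => ∫ x, h x ∂(M.kf p.2))
    (hQsm.measurable.comp measurable_snd) (C := C) (fun p => hQbd p.2)
  have hfinal : (fun ω => ∫ t, (fun p : Ω × Θ => ∫ x, h x ∂(M.kf p.2)) (ω, t) ∂(M.kG n ω))
      = M.psi h n := by
    funext ω
    have hQ : ∀ t, ∫ x, h x ∂(M.kf t) = (M.q h t).toReal := by
      intro t
      rw [q, ← integral_toReal (hme.ennreal_ofReal.aemeasurable)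
        (Eventually.of_forall fun x => ENNReal.ofReal_lt_top)]
      refine integral_congr_ae (Eventually.of_forall fun x => ?_)
      exact (ENNReal.toReal_ofReal (h0 x)).symm
    simp_rw [hQ]
    rw [psi, integral_toReal ((M.q_meas hme).aemeasurable)
      (Eventually.of_forall fun t => lt_of_le_of_lt (M.q_le hC t) ENNReal.ofReal_lt_top)]
  refine tower.trans ?_
  refine (condExp_congr_ae inner).trans ?_
  refine houter.trans ?_
  rw [hfinal]


variable (h) in
/-- normalizing constant of the posterior update -/
def cden (m : ℕ) (p : Ω × 𝕏) : ℝ≥0∞ := ∫⁻ t, M.f p.2 t ∂(M.kG m p.1)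

variable (h) in
/-- numerator of the posterior expectation of `q` -/
def rnum (m : ℕ) (p : Ω × 𝕏) : ℝ≥0∞ := ∫⁻ t, M.f p.2 t * M.q h t ∂(M.kG m p.1)

variable (h) in
/-- the function whose composition with `(ω, X (m+1) ω)` is `psi h (m+1)` -/
def HH (m : ℕ) (p : Ω × 𝕏) : ℝ :=
  (1 - M.α (m+1)) * M.psi h m p.1 +
    M.α (m+1) * ((M.cden m p)⁻¹ * M.rnum h m p).toReal

lemma cden_meas (m : ℕ) : Measurable[(M.F m).prod m𝕏] (M.cden m) :=
  @lintegral_kernel_meas (Ω × 𝕏) Θ ((M.F m).prod m𝕏) mΘ (fun p => M.kG m p.1)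
    (fun A hA => ((M.kG m).measurable_coe hA).comp measurable_fst)
    (fun p => le_of_eq measure_univ)
    (fun pt => M.f pt.1.2 pt.2)
    (M.meas_f.comp ((measurable_snd.comp measurable_fst).prodMk measurable_snd))

include hme in
lemma rnum_meas (m : ℕ) : Measurable[(M.F m).prod m𝕏] (M.rnum h m) :=
  @lintegral_kernel_meas (Ω × 𝕏) Θ ((M.F m).prod m𝕏) mΘ (fun p => M.kG m p.1)
    (fun A hA => ((M.kG m).measurable_coe hA).comp measurable_fst)
    (fun p => le_of_eq measure_univ)
    (fun pt => M.f pt.1.2 pt.2 * M.q h pt.2)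
    ((M.meas_f.comp ((measurable_snd.comp measurable_fst).prodMk measurable_snd)).mul
      ((M.q_meas hme).comp measurable_snd))

include hC in
lemma rnum_le (m : ℕ) (p : Ω × 𝕏) :
    M.rnum h m p ≤ ENNReal.ofReal C * M.cden m p := by
  have hfm : Measurable (fun t => M.f p.2 t) := M.meas_f.comp measurable_prodMk_left
  calc M.rnum h m p ≤ ∫⁻ t, M.f p.2 t * ENNReal.ofReal C ∂(M.kG m p.1) :=
        lintegral_mono fun t => mul_le_mul_right (M.q_le hC t) _
    _ = ENNReal.ofReal C * M.cden m p := by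
        rw [lintegral_mul_const _ hfm, mul_comm]; rfl

include hC in
lemma crle (m : ℕ) (p : Ω × 𝕏) :
    (M.cden m p)⁻¹ * M.rnum h m p ≤ ENNReal.ofReal C := by
  have h1 : M.rnum h m p ≤ ENNReal.ofReal C * M.cden m p := M.rnum_le hC m p
  calc (M.cden m p)⁻¹ * M.rnum h m p
      ≤ (M.cden m p)⁻¹ * (ENNReal.ofReal C * M.cden m p) := mul_le_mul_right h1 _
    _ = ENNReal.ofReal C * ((M.cden m p)⁻¹ * M.cden m p) := by ring
    _ ≤ ENNReal.ofReal C * 1 := mul_le_mul_right (inv_mul_le_one' _) _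
    _ = ENNReal.ofReal C := mul_one _

include hme in
lemma HH_meas (m : ℕ) : Measurable[(M.F m).prod m𝕏] (M.HH h m) := by
  have h1 : Measurable[(M.F m).prod m𝕏] (fun p : Ω × 𝕏 => M.psi h m p.1) :=
    (M.psi_meas hme m).comp measurable_fst
  exact ((h1.const_mul _).add
    ((((M.cden_meas m).inv.mul (M.rnum_meas hme m)).ennreal_toReal).const_mul _))

include hC in
lemma HH_bd (hC0 : 0 ≤ C) (m : ℕ) (p : Ω × 𝕏) : |M.HH h m p| ≤ C := by
  obtain ⟨hα0, hα1⟩ := M.α_mem (m+1)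
  have hψ0 : 0 ≤ M.psi h m p.1 := M.psi_nonneg m p.1
  have hψC : M.psi h m p.1 ≤ C := M.psi_le hC hC0 m p.1
  have ht0 : 0 ≤ ((M.cden m p)⁻¹ * M.rnum h m p).toReal := ENNReal.toReal_nonneg
  have htC : ((M.cden m p)⁻¹ * M.rnum h m p).toReal ≤ C :=
    ENNReal.toReal_le_of_le_ofReal hC0 (M.crle hC m p)
  rw [HH, abs_of_nonneg (by nlinarith)]
  nlinarith

include hme hC in
lemma claimA (m : ℕ) :
    M.psi h (m+1) =ᵐ[M.P] fun ω => M.HH h m (ω, M.X (m+1) ω) := by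
  haveI := M.probP
  filter_upwards [M.kG_ae (m+1), M.kG_ae m] with ω h1 h2
  have hfx : Measurable (M.f (M.X (m+1) ω)) := M.meas_f.comp measurable_prodMk_left
  obtain ⟨hα0, hα1⟩ := M.α_mem (m+1)
  have hafin : ∫⁻ t, M.q h t ∂(M.kG m ω) ≠ ∞ :=
    ne_of_lt (lt_of_le_of_lt (M.lintegral_q_le hC m ω) ENNReal.ofReal_lt_top)
  have hbfin : (M.cden m (ω, M.X (m+1) ω))⁻¹ * M.rnum h m (ω, M.X (m+1) ω) ≠ ∞ :=
    ne_of_lt (lt_of_le_of_lt (M.crle hC m _) ENNReal.ofReal_lt_top)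
  show M.psi h (m+1) ω = M.HH h m (ω, M.X (m+1) ω)
  rw [psi, h1, M.G_rec, ← h2, lintegral_add_measure, lintegral_smul_measure,
    lintegral_smul_measure, lintegral_smul_measure,
    lintegral_withDensity_eq_lintegral_mul _ hfx (M.q_meas hme)]
  have hr : ∫⁻ t, (M.f (M.X (m+1) ω) * M.q h) t ∂(M.kG m ω) = M.rnum h m (ω, M.X (m+1) ω) := rfl
  have hcd : ∫⁻ t, M.f (M.X (m+1) ω) t ∂(M.kG m ω) = M.cden m (ω, M.X (m+1) ω) := rfl
  rw [hr, hcd, HH]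
  simp only [smul_eq_mul]
  rw [ENNReal.toReal_add, ENNReal.toReal_mul, ENNReal.toReal_mul,
    ENNReal.toReal_ofReal (by linarith), ENNReal.toReal_ofReal (le_of_lt hα0)]
  · rw [psi]
  · exact ENNReal.mul_ne_top ENNReal.ofReal_ne_top hafin
  · exact ENNReal.mul_ne_top ENNReal.ofReal_ne_top hbfin


include hme hC in
lemma claimD (hC0 : 0 ≤ C) (m : ℕ) (ω : Ω) :
    ∫ x, M.HH h m (ω, x) ∂(M.kP m ω) = M.psi h m ω := by
  haveI := M.probP
  haveI := M.sfin
  haveI : IsProbabilityMeasure (M.kP m ω) := IsMarkovKernel.isProbabilityMeasure ω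
  haveI : IsProbabilityMeasure (M.kG m ω) := IsMarkovKernel.isProbabilityMeasure ω
  obtain ⟨hα0, hα1⟩ := M.α_mem (m+1)
  have hsecE : Measurable fun x => (M.cden m (ω, x))⁻¹ * M.rnum h m (ω, x) :=
    ((M.cden_meas m).comp measurable_prodMk_left).inv.mul
      ((M.rnum_meas hme m).comp measurable_prodMk_left)
  have hsec : Measurable fun x => ((M.cden m (ω, x))⁻¹ * M.rnum h m (ω, x)).toReal :=
    hsecE.ennreal_toReal
  have hint2 : Integrable
      (fun x => M.α (m+1) * ((M.cden m (ω, x))⁻¹ * M.rnum h m (ω, x)).toReal)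
      (M.kP m ω) := by
    refine integrable_of_bound _ ((hsec.const_mul _).aestronglyMeasurable) (M.α (m+1) * C) ?_
    intro x
    rw [abs_mul, abs_of_nonneg (le_of_lt hα0), abs_of_nonneg ENNReal.toReal_nonneg]
    exact mul_le_mul_of_nonneg_left
      (ENNReal.toReal_le_of_le_ofReal hC0 (M.crle hC m _)) (le_of_lt hα0)
  have hsplit : (fun x => M.HH h m (ω, x))
      = fun x => (1 - M.α (m+1)) * M.psi h m ω +
          M.α (m+1) * ((M.cden m (ω, x))⁻¹ * M.rnum h m (ω, x)).toReal := rfl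
  rw [hsplit, integral_add (integrable_const _) hint2, integral_const,
    integral_const_mul]
  -- compute the second integral
  have hJ : ∫ x, ((M.cden m (ω, x))⁻¹ * M.rnum h m (ω, x)).toReal ∂(M.kP m ω)
      = (∫⁻ x, (M.cden m (ω, x))⁻¹ * M.rnum h m (ω, x) ∂(M.kP m ω)).toReal :=
    integral_toReal hsecE.aemeasurable
      (Eventually.of_forall fun x => lt_of_le_of_lt (M.crle hC m _) ENNReal.ofReal_lt_top)
  have hcsec : Measurable fun x => M.cden m (ω, x) :=
    (M.cden_meas m).comp measurable_prodMk_left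
  have hkP : M.kP m ω = M.μ.withDensity fun x => M.cden m (ω, x) := M.kP_eq_withDensity m ω
  have hfin_c : ∀ᵐ x ∂M.μ, M.cden m (ω, x) < ∞ := by
    refine ae_lt_top hcsec ?_
    have huniv : ∫⁻ x, M.cden m (ω, x) ∂M.μ = M.kP m ω Set.univ := by
      rw [hkP, withDensity_apply _ MeasurableSet.univ, Measure.restrict_univ]
    rw [huniv, measure_univ]
    exact ENNReal.one_ne_top
  have hlw : ∫⁻ x, (M.cden m (ω, x))⁻¹ * M.rnum h m (ω, x) ∂(M.kP m ω)
      = ∫⁻ x, M.rnum h m (ω, x) ∂M.μ := by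
    rw [hkP, lintegral_withDensity_eq_lintegral_mul _ hcsec hsecE]
    refine lintegral_congr_ae ?_
    filter_upwards [hfin_c] with x hx
    simp only [Pi.mul_apply]
    rcases eq_or_ne (M.cden m (ω, x)) 0 with h0' | h0'
    · have hr0 : M.rnum h m (ω, x) = 0 := by
        have hle := M.rnum_le hC m (ω, x)
        rw [h0', mul_zero] at hle
        exact le_antisymm hle zero_le
      simp [h0', hr0]
    · rw [← mul_assoc, ENNReal.mul_inv_cancel h0' hx.ne, one_mul]
  have hrint : ∫⁻ x, M.rnum h m (ω, x) ∂M.μ = ∫⁻ t, M.q h t ∂(M.kG m ω) := by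
    have hrw : (fun x => M.rnum h m (ω, x))
        = fun x => ∫⁻ t, M.f x t * M.q h t ∂(M.kG m ω) := rfl
    rw [hrw]
    have hunc : AEMeasurable (Function.uncurry fun x t => M.f x t * M.q h t)
        (M.μ.prod (M.kG m ω)) := by
      have : Measurable fun p : 𝕏 × Θ => M.f p.1 p.2 * M.q h p.2 :=
        M.meas_f.mul ((M.q_meas hme).comp measurable_snd)
      exact this.aemeasurable
    rw [lintegral_lintegral_swap hunc]
    refine lintegral_congr fun t => ?_
    have hft : Measurable fun x => M.f x t :=
      M.meas_f.comp (measurable_id.prodMk measurable_const)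
    rw [lintegral_mul_const _ hft, M.f_dens t, one_mul]
  rw [hJ, hlw, hrint]
  have hψ : (∫⁻ t, M.q h t ∂(M.kG m ω)).toReal = M.psi h m ω := rfl
  rw [hψ]
  simp only [measure_univ, probReal_univ, ENNReal.toReal_one, one_smul, smul_eq_mul]
  ring

include hme hC in
/-- E2: the predictive expectations form a martingale. -/
lemma E2 (hC0 : 0 ≤ C) (m : ℕ) :
    M.P[M.psi h (m+1)|M.F m] =ᵐ[M.P] M.psi h m := by
  haveI := M.probP
  have hA := M.claimA hme hC m
  have hCp := M.condexp_pred m (M.HH_meas hme m) (M.HH_bd hC hC0 m)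
  exact (condExp_congr_ae hA).trans (hCp.trans (Eventually.of_forall fun ω => M.claimD hme hC hC0 m ω))


include hme hC in
lemma key (h0 : ∀ x, 0 ≤ h x) (hC0 : 0 ≤ C) :
    ∀ k, 1 ≤ k → ∀ n, M.P[fun ω => h (M.X (n+k) ω)|M.F n]
      =ᵐ[M.P] M.P[fun ω => h (M.X (n+1) ω)|M.F n] := by
  haveI := M.probP
  intro k hk
  induction k, hk using Nat.le_induction with
  | base => exact fun n => EventuallyEq.rfl
  | succ k hk ih =>
    intro n
    have hF1 : M.F (n+1) ≤ mΩ := M.hF_le (n+1)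
    haveI : IsProbabilityMeasure (M.P.trim hF1) :=
      ⟨by rw [trim_measurableSet_eq hF1 MeasurableSet.univ]; exact measure_univ⟩
    have tower : M.P[fun ω => h (M.X (n+(k+1)) ω)|M.F n]
        =ᵐ[M.P] M.P[M.P[fun ω => h (M.X (n+(k+1)) ω)|M.F (n+1)]|M.F n] :=
      (condExp_condExp_of_le (M.hF_mono n.le_succ) hF1).symm
    have hidx : (fun ω => h (M.X (n+(k+1)) ω)) = fun ω => h (M.X ((n+1)+k) ω) := by
      have : n + (k+1) = (n+1) + k := by ring
      rw [this]
    have hinner1 : M.P[fun ω => h (M.X (n+(k+1)) ω)|M.F (n+1)]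
        =ᵐ[M.P] M.P[fun ω => h (M.X ((n+1)+1) ω)|M.F (n+1)] := by
      rw [hidx]
      exact ih (n+1)
    have hinner2 : M.P[fun ω => h (M.X ((n+1)+1) ω)|M.F (n+1)]
        =ᵐ[M.P] M.psi h (n+1) := M.E1 hme hC h0 (n+1)
    have big : M.P[fun ω => h (M.X (n+(k+1)) ω)|M.F n]
        =ᵐ[M.P] M.P[M.psi h (n+1)|M.F n] :=
      tower.trans (condExp_congr_ae (hinner1.trans hinner2))
    exact big.trans ((M.E2 hme hC hC0 n).trans (M.E1 hme hC h0 n).symm)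

end NewtonModel

/-- In Newton's model, the sequence `(X n)` is conditionally identically distributed:
for every `n ≥ 0`, `k ≥ 1` and every bounded measurable `h : 𝕏 → ℝ`,
`E[h(X_{n+k}) | F n] = E[h(X_{n+1}) | F n]` `P`-almost surely. -/
theorem newton_X_cid
    {Ω 𝕏 Θ : Type*} [MeasurableSpace Ω]
    [MeasurableSpace 𝕏] [StandardBorelSpace 𝕏]
    [MeasurableSpace Θ] [StandardBorelSpace Θ]
    (M : NewtonModel Ω 𝕏 Θ) :
    ∀ (h : 𝕏 → ℝ), Measurable h → (∃ C : ℝ, ∀ x, |h x| ≤ C) →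
      ∀ (n k : ℕ), 1 ≤ k →
        M.P[fun ω => h (M.X (n + k) ω) | M.F n]
          =ᵐ[M.P] M.P[fun ω => h (M.X (n + 1) ω) | M.F n] := by
  rintro h hmeas ⟨C, hC⟩ n k hk
  haveI := M.probP
  -- `Ω` and `𝕏` are nonempty, so `C ≥ 0`
  have hΩ : Nonempty Ω := by
    rcases isEmpty_or_nonempty Ω with hO | hO
    · exfalso
      have hE : M.P Set.univ = 1 := measure_univ
      rw [Set.univ_eq_empty_iff.mpr hO, measure_empty] at hE
      exact zero_ne_one hE
    · exact hO
  have hX : Nonempty 𝕏 := ⟨M.X 0 (Classical.arbitrary Ω)⟩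
  have hC0 : 0 ≤ C := le_trans (abs_nonneg _) (hC (Classical.arbitrary 𝕏))
  -- shift `h` to be nonnegative
  set h' : 𝕏 → ℝ := fun x => h x + C with hh'
  have h'me : Measurable h' := hmeas.add_const C
  have h'0 : ∀ x, 0 ≤ h' x := fun x => by
    have := (abs_le.mp (hC x)).1
    simp only [hh']
    linarith
  have h'C : ∀ x, h' x ≤ C + C := fun x => by
    have := (abs_le.mp (hC x)).2
    simp only [hh']
    linarith
  have key' := M.key h'me h'C h'0 (by linarith) k hk n
  have split : ∀ i : ℕ, M.P[fun ω => h' (M.X i ω)|M.F n]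
      =ᵐ[M.P] fun ω => (M.P[fun ω => h (M.X i ω)|M.F n]) ω + C := by
    intro i
    have hint : Integrable (fun ω => h (M.X i ω)) M.P :=
      integrable_of_bound _ ((hmeas.comp (M.meas_X i)).aestronglyMeasurable) C
        (fun ω => hC _)
    have hsum : (fun ω => h' (M.X i ω))
        = (fun ω => h (M.X i ω)) + fun _ => C := rfl
    rw [hsum]
    refine (condExp_add hint (integrable_const C) _).trans ?_
    rw [condExp_const (M.hF_le n)]
    exact Filter.EventuallyEq.rfl
  have chain : (fun ω => (M.P[fun ω => h (M.X (n+k) ω)|M.F n]) ω + C)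
      =ᵐ[M.P] fun ω => (M.P[fun ω => h (M.X (n+1) ω)|M.F n]) ω + C :=
    (split (n+k)).symm.trans (key'.trans (split (n+1)))
  filter_upwards [chain] with ω hω
  have : (M.P[fun ω => h (M.X (n+k) ω)|M.F n]) ω + C
      = (M.P[fun ω => h (M.X (n+1) ω)|M.F n]) ω + C := hω
  linarith
end
end

section
/- Let (α_n) ⊆ (0,1) with ∑_n α_n² < ∞, and suppose α_n = (n b_n)^{-1} for a sequence (b_n) of positive numbers that is nonincreasing for all sufficiently large n. Let (r_n) be a monotone positive sequence with r_n ~ (∑_{k>n} α_k²)^{-1}. Then limsup_n r_{n−1} α_n ≤ limsup_n b_n < ∞, and consequently ∑_{k≥1} r_k² α_{k+1}⁴ < ∞. -/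
open Filter
open scoped Topology ENNReal

lemma aux_telescope (n : ℕ) (hn : 1 ≤ n) :
    HasSum (fun k : ℕ => (((n : ℝ) + k) * ((n : ℝ) + k + 1))⁻¹) (n : ℝ)⁻¹ := by
  have hn1 : (1 : ℝ) ≤ (n : ℝ) := by exact_mod_cast hn
  have hpos : ∀ k : ℕ, (0 : ℝ) < (n : ℝ) + k := fun k => by
    have : (0:ℝ) ≤ (k:ℝ) := Nat.cast_nonneg k
    linarith
  rw [hasSum_iff_tendsto_nat_of_nonneg (fun k => by
    have := hpos k; positivity)]
  have key : ∀ m : ℕ, ∑ k ∈ Finset.range m, (((n : ℝ) + k) * ((n : ℝ) + k + 1))⁻¹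
      = (n : ℝ)⁻¹ - ((n : ℝ) + m)⁻¹ := by
    intro m
    induction m with
    | zero => simp
    | succ m ih =>
      rw [Finset.sum_range_succ, ih]
      have h1 : ((n:ℝ) + m) ≠ 0 := (hpos m).ne'
      have h2 : ((n:ℝ) + m + 1) ≠ 0 := by have := hpos m; linarith
      have h3 : ((n:ℝ) + (m+1 : ℕ)) = (n:ℝ) + m + 1 := by push_cast; ring
      rw [h3]
      field_simp
      ring
  simp only [key]
  have h1 : Tendsto (fun m : ℕ => ((n : ℝ) + m)) atTop atTop :=
    tendsto_atTop_add_const_left _ _ tendsto_natCast_atTop_atTop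
  have h2 : Tendsto (fun m : ℕ => ((n : ℝ) + m)⁻¹) atTop (𝓝 0) := h1.inv_tendsto_atTop
  simpa using tendsto_const_nhds.sub h2

/-- If `αₙ = (n bₙ)⁻¹` with `(bₙ)` positive and eventually nonincreasing, `∑ αₙ² < ∞`, and
`(rₙ)` is a monotone positive sequence with `rₙ ~ (∑_{k>n} αₖ²)⁻¹`, then
`limsup rₙ₋₁ αₙ ≤ limsup bₙ < ∞` and consequently `∑ rₖ² α_{k+1}⁴ < ∞`. -/
theorem newton_rate_condition_sufficient
    (α b : ℕ → ℝ)
    (hα_mem : ∀ n, α n ∈ Set.Ioo (0 : ℝ) 1)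
    (hb_pos : ∀ n, 0 < b n)
    (hb_mono : ∃ N : ℕ, ∀ m n : ℕ, N ≤ n → n ≤ m → b m ≤ b n)
    (hform : ∀ n : ℕ, 1 ≤ n → α n = ((n : ℝ) * b n)⁻¹)
    (hα_sq : Summable fun n => (α n) ^ 2)
    (r : ℕ → ℝ) (hr_pos : ∀ n, 0 < r n) (hr_mono : Monotone r ∨ Antitone r)
    (hr_equiv : Tendsto (fun n => r n * ∑' k, (α (n + 1 + k)) ^ 2) atTop (𝓝 1)) :
    (Filter.limsup (fun n : ℕ => ENNReal.ofReal (r (n - 1) * α n)) atTop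
        ≤ Filter.limsup (fun n : ℕ => ENNReal.ofReal (b n)) atTop ∧
      Filter.limsup (fun n : ℕ => ENNReal.ofReal (b n)) atTop < ∞) ∧
    Summable (fun k => (r k) ^ 2 * (α (k + 1)) ^ 4) := by
  obtain ⟨N, hN⟩ := hb_mono
  have hα_pos : ∀ n, 0 < α n := fun n => (hα_mem n).1
  -- key pointwise bound
  have hkey : ∀ n : ℕ, N ≤ n → 1 ≤ n → α n ≤ b n * ∑' k, (α (n + k)) ^ 2 := by
    intro n hNn hn1
    have hbn := hb_pos n
    have hn1' : (1:ℝ) ≤ (n:ℝ) := by exact_mod_cast hn1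
    have hnpos : ∀ k : ℕ, (0:ℝ) < (n:ℝ) + k := fun k => by
      have : (0:ℝ) ≤ (k:ℝ) := Nat.cast_nonneg k
      linarith
    have hsum_tail : Summable fun k => (α (n + k)) ^ 2 := by
      have := (summable_nat_add_iff n).2 hα_sq
      simpa [add_comm] using this
    have htel := aux_telescope n hn1
    have htel2 : HasSum (fun k : ℕ => (((n:ℝ) + k) * ((n:ℝ) + k + 1))⁻¹ * ((b n) ^ 2)⁻¹)
        ((n:ℝ)⁻¹ * ((b n) ^ 2)⁻¹) := htel.mul_right _
    have hterm : ∀ k : ℕ, (((n:ℝ) + k) * ((n:ℝ) + k + 1))⁻¹ * ((b n) ^ 2)⁻¹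
        ≤ (α (n + k)) ^ 2 := by
      intro k
      have hnk1 : 1 ≤ n + k := le_trans hn1 (Nat.le_add_right n k)
      have hα_eq := hform (n + k) hnk1
      have hble : b (n + k) ≤ b n := hN (n + k) n hNn (Nat.le_add_right n k)
      have hbk := hb_pos (n + k)
      have hnk := hnpos k
      have h1 : (((n:ℝ) + k) * b n)⁻¹ ≤ α (n + k) := by
        rw [hα_eq]
        push_cast
        gcongr
      have h2 : ((((n:ℝ) + k) * b n)⁻¹) ^ 2 ≤ (α (n + k)) ^ 2 :=
        pow_le_pow_left₀ (by positivity) h1 2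
      calc (((n:ℝ) + k) * ((n:ℝ) + k + 1))⁻¹ * ((b n) ^ 2)⁻¹
          ≤ (((n:ℝ) + k) ^ 2)⁻¹ * ((b n) ^ 2)⁻¹ := by
            gcongr
            nlinarith
        _ = ((((n:ℝ) + k) * b n)⁻¹) ^ 2 := by
            rw [inv_pow, mul_pow, mul_inv]
        _ ≤ (α (n + k)) ^ 2 := h2
    have hsum_le : (n:ℝ)⁻¹ * ((b n) ^ 2)⁻¹ ≤ ∑' k, (α (n + k)) ^ 2 := by
      rw [← htel2.tsum_eq]
      exact Summable.tsum_le_tsum hterm htel2.summable hsum_tail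
    rw [hform n hn1]
    have hn0 : (n:ℝ) ≠ 0 := by linarith
    calc ((n:ℝ) * b n)⁻¹ = b n * ((n:ℝ)⁻¹ * ((b n) ^ 2)⁻¹) := by
          field_simp
      _ ≤ b n * ∑' k, (α (n + k)) ^ 2 := by
          exact mul_le_mul_of_nonneg_left hsum_le hbn.le
  -- eventual bound
  have hbound : ∀ δ : ℝ, 0 < δ → ∀ᶠ n in atTop, r (n - 1) * α n ≤ (1 + δ) * b n := by
    intro δ hδ
    have hev : ∀ᶠ n in atTop, r n * ∑' k, (α (n + 1 + k)) ^ 2 ≤ 1 + δ :=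
      hr_equiv.eventually (eventually_le_nhds (by linarith))
    obtain ⟨M₁, hM₁⟩ := eventually_atTop.1 hev
    filter_upwards [eventually_ge_atTop (M₁ + 1), eventually_ge_atTop (N + 1)]
      with n hn₁ hn₂
    have hn1 : 1 ≤ n := le_trans (Nat.le_add_left 1 M₁) hn₁
    have hNn : N ≤ n := le_trans (Nat.le_succ N) hn₂
    have hrS := hM₁ (n - 1) (by omega)
    have heq : n - 1 + 1 = n := by omega
    rw [heq] at hrS
    have hk := hkey n hNn hn1
    have h1 : 0 < r (n - 1) := hr_pos _
    have h2 : 0 < b n := hb_pos n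
    have h3 : 0 ≤ ∑' k, (α (n + k)) ^ 2 :=
      tsum_nonneg fun k => sq_nonneg _
    nlinarith [mul_le_mul_of_nonneg_left hk h1.le,
      mul_le_mul_of_nonneg_right hrS h2.le]
  -- limsup b < ∞
  set L := Filter.limsup (fun n : ℕ => ENNReal.ofReal (b n)) atTop with hL
  have hLle : L ≤ ENNReal.ofReal (b N) := by
    refine limsup_le_of_le (by isBoundedDefault) ?_
    filter_upwards [eventually_ge_atTop N] with n hn
    exact ENNReal.ofReal_le_ofReal (hN n N le_rfl hn)
  have hLlt : L < ∞ := lt_of_le_of_lt hLle ENNReal.ofReal_lt_top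
  -- limsup inequality
  have hstep : ∀ δ : ℝ, 0 < δ →
      Filter.limsup (fun n : ℕ => ENNReal.ofReal (r (n - 1) * α n)) atTop
        ≤ ENNReal.ofReal (1 + δ) * L := by
    intro δ hδ
    have hle : Filter.limsup (fun n : ℕ => ENNReal.ofReal (r (n - 1) * α n)) atTop
        ≤ Filter.limsup (fun n : ℕ => ENNReal.ofReal (1 + δ) * ENNReal.ofReal (b n)) atTop := by
      refine limsup_le_limsup ?_ (by isBoundedDefault) (by isBoundedDefault)
      filter_upwards [hbound δ hδ] with n hn
      rw [← ENNReal.ofReal_mul (by linarith)]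
      exact ENNReal.ofReal_le_ofReal hn
    rwa [ENNReal.limsup_const_mul_of_ne_top ENNReal.ofReal_ne_top] at hle
  have hmain : Filter.limsup (fun n : ℕ => ENNReal.ofReal (r (n - 1) * α n)) atTop ≤ L := by
    apply ENNReal.le_of_forall_pos_le_add
    intro ε hε hLfin
    have hLr : (0:ℝ) ≤ L.toReal := ENNReal.toReal_nonneg
    set δ : ℝ := (ε : ℝ) / (L.toReal + 1) with hδdef
    have hδ : 0 < δ := by
      apply div_pos (by exact_mod_cast hε)
      linarith
    calc Filter.limsup (fun n : ℕ => ENNReal.ofReal (r (n - 1) * α n)) atTop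
        ≤ ENNReal.ofReal (1 + δ) * L := hstep δ hδ
      _ = (1 + ENNReal.ofReal δ) * L := by
          rw [ENNReal.ofReal_add (by norm_num) hδ.le, ENNReal.ofReal_one]
      _ = L + ENNReal.ofReal δ * L := by ring
      _ ≤ L + ε := by
          gcongr
          have : L = ENNReal.ofReal L.toReal := (ENNReal.ofReal_toReal hLfin.ne).symm
          rw [this, ← ENNReal.ofReal_mul hδ.le]
          calc ENNReal.ofReal (δ * L.toReal) ≤ ENNReal.ofReal (ε : ℝ) := by
                apply ENNReal.ofReal_le_ofReal
                rw [hδdef, div_mul_eq_mul_div, div_le_iff₀ (by linarith)]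
                have hε0 : (0:ℝ) ≤ (ε : ℝ) := ε.coe_nonneg
                nlinarith
            _ = (ε : ℝ≥0∞) := ENNReal.ofReal_coe_nnreal
  refine ⟨⟨hmain, hLlt⟩, ?_⟩
  -- summability
  obtain ⟨M, hM⟩ := eventually_atTop.1 (hbound 1 one_pos)
  set P := max M N with hP
  rw [← summable_nat_add_iff P]
  have hbnd : ∀ k : ℕ, r (k + P) ^ 2 * (α (k + P + 1)) ^ 4
      ≤ (2 * b N) ^ 2 * (α (k + P + 1)) ^ 2 := by
    intro k
    have h0 := hM (k + P + 1) (by omega)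
    have he : k + P + 1 - 1 = k + P := by omega
    rw [he] at h0
    have h2 : b (k + P + 1) ≤ b N := hN (k + P + 1) N le_rfl (by omega)
    have h3 : r (k + P) * α (k + P + 1) ≤ 2 * b N := by linarith
    have h4 : (r (k + P) * α (k + P + 1)) ^ 2 ≤ (2 * b N) ^ 2 :=
      pow_le_pow_left₀ (mul_nonneg (hr_pos _).le (hα_pos _).le) h3 2
    calc r (k + P) ^ 2 * (α (k + P + 1)) ^ 4
        = (r (k + P) * α (k + P + 1)) ^ 2 * (α (k + P + 1)) ^ 2 := by ring
      _ ≤ (2 * b N) ^ 2 * (α (k + P + 1)) ^ 2 :=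
          mul_le_mul_of_nonneg_right h4 (sq_nonneg _)
  apply Summable.of_nonneg_of_le (fun k => by positivity) hbnd
  exact (((summable_nat_add_iff (P + 1)).2 hα_sq).mul_left _)
end
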